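/- arXiv:1406.2428 — 6 statements merged into one kernel-verified Lean document; each statement's English description precedes it below -/
import Mathlib

section
/- Let P be a finite set of points in the Euclidean plane ℝ² and let L be a line. Let l be the number of points of P not lying on L. If p ∈ P lies on L, then the number of points of P visible from p (with respect to P) is at most l + 2. -/
/-- The Euclidean plane ℝ². -/
abbrev Plane : Type := EuclideanSpace ℝ (Fin 2)

/-- Two points `p` and `q` are visible to each other with respect to a point set `P`
if they are distinct and no point of `P` lies strictly between them. -/
def Visible (P : Set Plane) (p q : Plane) : Prop :=
  p ≠ q ∧ ∀ r ∈ P, ¬ Sbtw ℝ p r q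

/-- A line in the plane: an affine subspace of dimension 1. -/
def IsLine (L : AffineSubspace ℝ Plane) : Prop :=
  Module.finrank ℝ L.direction = 1

lemma sbtw_aux (p v : Plane) (hv : v ≠ 0) {t1 t2 : ℝ} (h0 : 0 < t1) (h12 : t1 < t2) :
    Sbtw ℝ p (t1 • v +ᵥ p) (t2 • v +ᵥ p) := by
  have hw : Wbtw ℝ p (t1 • v +ᵥ p) (t2 • v +ᵥ p) := by
    have := wbtw_smul_vadd_smul_vadd_of_nonneg_of_le p v (le_of_lt h0) (le_of_lt h12)
    simpa using this
  refine ⟨hw, ?_, ?_⟩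
  · intro h
    have : t1 • v = 0 := by
      have := congrArg (· -ᵥ p) h
      simpa using this
    rcases smul_eq_zero.1 this with h | h
    · exact h0.ne' h
    · exact hv h
  · intro h
    have : t1 • v = t2 • v := by
      have := congrArg (· -ᵥ p) h
      simpa using this
    have : t1 = t2 := by
      have := sub_eq_zero.2 this
      rw [← sub_smul] at this
      rcases smul_eq_zero.1 this with h | h
      · linarith [sub_eq_zero.1 h]
      · exact absurd h hv
    exact h12.ne this


/-- First half of Lemma 2 of the paper: if `p ∈ P` lies on the line `L` and
`l` is the number of points of `P` not on `L`, then `p` sees at most `l + 2`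
points of `P`. -/
theorem visible_card_le_of_mem_line (P : Set Plane) (hP : P.Finite)
    (L : AffineSubspace ℝ Plane) (hL : IsLine L)
    (l : ℕ) (hl : l = {q : Plane | q ∈ P ∧ q ∉ L}.ncard)
    (p : Plane) (hp : p ∈ P) (hpL : p ∈ L) :
    {q : Plane | q ∈ P ∧ Visible P p q}.ncard ≤ l + 2 := by
  classical
  -- get a spanning vector for the direction of L
  obtain ⟨v, hv0, hvspan⟩ := (finrank_eq_one_iff' (K := ℝ) (V := L.direction)).1 hL
  set V : Plane := (v : Plane) with hV
  have hVne : V ≠ 0 := fun h => hv0 (Subtype.ext h)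
  -- every point of L is p + t • V
  have hparam : ∀ q ∈ L, ∃ t : ℝ, q = t • V +ᵥ p := by
    intro q hq
    have hd : q -ᵥ p ∈ L.direction := AffineSubspace.vsub_mem_direction hq hpL
    obtain ⟨c, hc⟩ := hvspan ⟨q -ᵥ p, hd⟩
    refine ⟨c, ?_⟩
    have : c • V = q -ᵥ p := congrArg Subtype.val hc
    rw [this]; simp
  set A : Set Plane := {q : Plane | q ∈ P ∧ q ∉ L} with hA
  set B : Set Plane := {q : Plane | q ∈ P ∧ Visible P p q ∧ q ∈ L} with hB
  have hAfin : A.Finite := hP.subset fun q hq => hq.1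
  have hBfin : B.Finite := hP.subset fun q hq => hq.1
  have hsub : {q : Plane | q ∈ P ∧ Visible P p q} ⊆ A ∪ B := by
    intro q hq
    by_cases hqL : q ∈ L
    · exact Or.inr ⟨hq.1, hq.2, hqL⟩
    · exact Or.inl ⟨hq.1, hqL⟩
  have key : ∀ q1 ∈ B, ∀ q2 ∈ B, ∀ s t : ℝ, q1 = s • V +ᵥ p → q2 = t • V +ᵥ p →
      0 < s → 0 < t → q1 = q2 := by
    intro q1 hq1 q2 hq2 s t hs ht hs0 ht0
    rcases lt_trichotomy s t with h | h | h
    · exfalso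
      have hsb : Sbtw ℝ p q1 q2 := by rw [hs, ht]; exact sbtw_aux p V hVne hs0 h
      exact hq2.2.1.2 q1 hq1.1 hsb
    · rw [hs, ht, h]
    · exfalso
      have hsb : Sbtw ℝ p q2 q1 := by rw [hs, ht]; exact sbtw_aux p V hVne ht0 h
      exact hq1.2.1.2 q2 hq2.1 hsb
  have key' : ∀ q1 ∈ B, ∀ q2 ∈ B, ∀ s t : ℝ, q1 = s • V +ᵥ p → q2 = t • V +ᵥ p →
      s < 0 → t < 0 → q1 = q2 := by
    intro q1 hq1 q2 hq2 s t hs ht hs0 ht0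
    have hs' : q1 = (-s) • (-V) +ᵥ p := by rw [hs, neg_smul_neg]
    have ht' : q2 = (-t) • (-V) +ᵥ p := by rw [ht, neg_smul_neg]
    have hVne' : -V ≠ 0 := neg_ne_zero.2 hVne
    rcases lt_trichotomy s t with h | h | h
    · exfalso
      have hsb : Sbtw ℝ p q2 q1 := by
        rw [hs', ht']
        exact sbtw_aux p (-V) hVne' (by linarith) (by linarith)
      exact hq1.2.1.2 q2 hq2.1 hsb
    · rw [hs, ht, h]
    · exfalso
      have hsb : Sbtw ℝ p q1 q2 := by
        rw [hs', ht']
        exact sbtw_aux p (-V) hVne' (by linarith) (by linarith)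
      exact hq2.2.1.2 q1 hq1.1 hsb
  -- B has at most 2 elements
  have hB2 : B.ncard ≤ 2 := by
    by_contra hcon
    push_neg at hcon
    obtain ⟨a, b, c, ha, hb, hc, hab, hac, hbc⟩ := (Set.two_lt_ncard_iff hBfin).1 hcon
    obtain ⟨ta, hta⟩ := hparam a ha.2.2
    obtain ⟨tb, htb⟩ := hparam b hb.2.2
    obtain ⟨tc, htc⟩ := hparam c hc.2.2
    have hta0 : ta ≠ 0 := by
      rintro rfl; exact ha.2.1.1 (by rw [hta]; simp)
    have htb0 : tb ≠ 0 := by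
      rintro rfl; exact hb.2.1.1 (by rw [htb]; simp)
    have htc0 : tc ≠ 0 := by
      rintro rfl; exact hc.2.1.1 (by rw [htc]; simp)
    rcases hta0.lt_or_gt with ha' | ha' <;>
      rcases htb0.lt_or_gt with hb' | hb' <;>
        rcases htc0.lt_or_gt with hc' | hc'
    · exact hab (key' a ha b hb ta tb hta htb ha' hb')
    · exact hab (key' a ha b hb ta tb hta htb ha' hb')
    · exact hac (key' a ha c hc ta tc hta htc ha' hc')
    · exact hbc (key b hb c hc tb tc htb htc hb' hc')
    · exact hbc (key' b hb c hc tb tc htb htc hb' hc')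
    · exact hac (key a ha c hc ta tc hta htc ha' hc')
    · exact hab (key a ha b hb ta tb hta htb ha' hb')
    · exact hab (key a ha b hb ta tb hta htb ha' hb')
  calc {q : Plane | q ∈ P ∧ Visible P p q}.ncard
      ≤ (A ∪ B).ncard := Set.ncard_le_ncard hsub (hAfin.union hBfin)
    _ ≤ A.ncard + B.ncard := Set.ncard_union_le A B
    _ ≤ l + 2 := by rw [hl]; exact Nat.add_le_add le_rfl hB2
end

section
/- Let P be a finite set of points in the Euclidean plane ℝ² and let L be a line. Let k be the number of points of P lying on L. If p ∈ P does not lie on L, then the number of points of P visible from p (with respect to P) is at least k. -/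
/-- On any segment from `p` to another point of `P`, there is a point of `P` visible
from `p`. -/
lemma exists_visible_on_segment (P : Set Plane) (hP : P.Finite) (p : Plane)
    {q : Plane} (hq : q ∈ P) (hqp : q ≠ p) :
    ∃ r, r ∈ P ∧ Visible P p r ∧ r ∈ segment ℝ p q ∧ r ≠ p := by
  set S : Set Plane := {r | r ∈ P ∧ r ∈ segment ℝ p q ∧ r ≠ p} with hS
  have hSfin : S.Finite := hP.subset fun r hr => hr.1
  have hSne : S.Nonempty := ⟨q, hq, right_mem_segment ℝ p q, hqp⟩
  obtain ⟨r, hrS, hrmin⟩ := Set.exists_min_image S (fun r => dist r p) hSfin hSne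
  refine ⟨r, hrS.1, ⟨fun h => hrS.2.2 h.symm, ?_⟩, hrS.2.1, hrS.2.2⟩
  intro s hsP hsbtw
  have hs_seg : s ∈ segment ℝ p r := mem_segment_iff_wbtw.2 hsbtw.wbtw
  have hs_seg' : s ∈ segment ℝ p q :=
    (convex_segment p q).segment_subset (left_mem_segment ℝ p q) hrS.2.1 hs_seg
  have hsS : s ∈ S := ⟨hsP, hs_seg', hsbtw.ne_left⟩
  have h1 : dist r p ≤ dist s p := hrmin s hsS
  have h2 : dist s p < max (dist p p) (dist r p) := hsbtw.dist_lt_max_dist p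
  rw [dist_self] at h2
  rw [max_eq_right dist_nonneg] at h2
  exact absurd h1 (not_le.2 h2)

/-- If `r ≠ p` lies on segments from `p` to two points of a line `L` not containing `p`,
then those two points coincide. -/
lemma eq_of_mem_segments (L : AffineSubspace ℝ Plane) {p r q₁ q₂ : Plane}
    (hq₁ : q₁ ∈ L) (hq₂ : q₂ ∈ L) (hpL : p ∉ L)
    (h₁ : r ∈ segment ℝ p q₁) (h₂ : r ∈ segment ℝ p q₂) (hrp : r ≠ p) :
    q₁ = q₂ := by
  rw [segment_eq_image'] at h₁ h₂
  obtain ⟨t₁, ht₁, hr₁⟩ := h₁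
  obtain ⟨t₂, ht₂, hr₂⟩ := h₂
  have ht₁0 : t₁ ≠ 0 := by
    rintro rfl; apply hrp; rw [← hr₁]; simp
  have ht₂0 : t₂ ≠ 0 := by
    rintro rfl; apply hrp; rw [← hr₂]; simp
  have key : t₁ • (q₁ - p) = t₂ • (q₂ - p) := by
    have h : p + t₁ • (q₁ - p) = p + t₂ • (q₂ - p) := by
      simpa using hr₁.trans hr₂.symm
    exact add_left_cancel h
  by_contra hne
  -- q₂ - p = (t₁/t₂) • (q₁ - p)
  have hq2p : q₂ - p = (t₁ / t₂) • (q₁ - p) := by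
    rw [div_eq_mul_inv, mul_comm, mul_smul, key, inv_smul_smul₀ ht₂0]
  set c : ℝ := t₁ / t₂ with hc
  have hc1 : c ≠ 1 := by
    intro h
    apply hne
    have : q₂ - p = q₁ - p := by rw [hq2p, h, one_smul]
    have := sub_left_injective this
    exact this.symm
  -- p = q₁ + (-(c-1)⁻¹) • (q₂ - q₁)
  have hdiff : q₂ - q₁ = (c - 1) • (q₁ - p) := by
    have : q₂ - q₁ = (q₂ - p) - (q₁ - p) := by abel
    rw [this, hq2p, sub_smul, one_smul]
  have hc10 : c - 1 ≠ 0 := sub_ne_zero.2 hc1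
  have hq1p : q₁ - p = (c - 1)⁻¹ • (q₂ - q₁) := by
    rw [hdiff, inv_smul_smul₀ hc10]
  have hpmem : p ∈ L := by
    have hv : q₂ - q₁ ∈ L.direction := by
      have := AffineSubspace.vsub_mem_direction hq₂ hq₁
      simpa using this
    have hv' : (-(c - 1)⁻¹) • (q₂ - q₁) ∈ L.direction := Submodule.smul_mem _ _ hv
    have : p = (-(c - 1)⁻¹) • (q₂ - q₁) +ᵥ q₁ := by
      have : p = q₁ - (c - 1)⁻¹ • (q₂ - q₁) := by
        have := hq1p
        have h' : p = q₁ - (q₁ - p) := by abel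
        rw [h', this]
      simp only [vadd_eq_add, neg_smul]
      rw [this]; abel
    rw [this]
    exact AffineSubspace.vadd_mem_of_mem_direction hv' hq₁
  exact hpL hpmem

/-- Second half of Lemma 2 of the paper: if `p ∈ P` does not lie on the line `L` and
`k` is the number of points of `P` on `L`, then `p` sees at least `k` points of `P`. -/
theorem visible_card_ge_of_not_mem_line (P : Set Plane) (hP : P.Finite)
    (L : AffineSubspace ℝ Plane) (hL : IsLine L)
    (k : ℕ) (hk : k = {q : Plane | q ∈ P ∧ q ∈ L}.ncard)
    (p : Plane) (hp : p ∈ P) (hpL : p ∉ L) :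
    k ≤ {q : Plane | q ∈ P ∧ Visible P p q}.ncard := by
  subst hk
  classical
  set f : Plane → Plane := fun q =>
    if h : q ∈ P ∧ q ≠ p then Classical.choose (exists_visible_on_segment P hP p h.1 h.2)
    else p with hf
  have hfspec : ∀ q (h : q ∈ P ∧ q ≠ p),
      f q ∈ P ∧ Visible P p (f q) ∧ f q ∈ segment ℝ p q ∧ f q ≠ p := by
    intro q h
    simp only [hf, dif_pos h]
    exact Classical.choose_spec (exists_visible_on_segment P hP p h.1 h.2)
  refine Set.ncard_le_ncard_of_injOn f ?_ ?_ (hP.subset fun q hq => hq.1)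
  · rintro q ⟨hqP, hqL⟩
    have hqp : q ≠ p := fun h => hpL (h ▸ hqL)
    obtain ⟨h1, h2, _, _⟩ := hfspec q ⟨hqP, hqp⟩
    exact ⟨h1, h2⟩
  · rintro q₁ ⟨hq₁P, hq₁L⟩ q₂ ⟨hq₂P, hq₂L⟩ heq
    have h₁ := hfspec q₁ ⟨hq₁P, fun h => hpL (h ▸ hq₁L)⟩
    have h₂ := hfspec q₂ ⟨hq₂P, fun h => hpL (h ▸ hq₂L)⟩
    exact eq_of_mem_segments L hq₁L hq₂L hpL h₁.2.2.1 (heq ▸ h₂.2.2.1) h₁.2.2.2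
end

section
/- Let P and P' be finite sets of points in the Euclidean plane ℝ² and let f : P → P' be a visibility isomorphism. Let L be a line, let k be the number of points of P on L and l the number of points of P not on L. If k ≥ (l + 3)², then the image set f(P ∩ L) is collinear, i.e., all images of the points of P lying on L lie on a common line in the plane. -/
/-- A visibility isomorphism between two point sets: a bijection of `P` onto `P'`
preserving the visibility relation in both directions. -/
def VisIso (P P' : Set Plane) (f : Plane → Plane) : Prop :=
  Set.BijOn f P P' ∧
    ∀ p ∈ P, ∀ q ∈ P, p ≠ q → (Visible P p q ↔ Visible P' (f p) (f q))

/-- Auxiliary sign lemma: if `p` is weakly between `ta • v +ᵥ p` and `tb • v +ᵥ p`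
with `v ≠ 0`, then `ta` and `tb` have opposite (weak) signs. -/
lemma sign_aux {p v : Plane} {ta tb : ℝ} (hv : v ≠ 0)
    (h : Wbtw ℝ (ta • v +ᵥ p) p (tb • v +ᵥ p)) :
    (ta ≤ 0 ∧ 0 ≤ tb) ∨ (tb ≤ 0 ∧ 0 ≤ ta) := by
  have hne : p ≠ v +ᵥ p := by
    intro h'
    apply hv
    have := congrArg (fun z => z -ᵥ p) h'.symm
    simpa using this
  have hinj : Function.Injective (AffineMap.lineMap p (v +ᵥ p) : ℝ → Plane) :=
    AffineMap.lineMap_injective ℝ hne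
  have key : ∀ t : ℝ, (AffineMap.lineMap p (v +ᵥ p) : ℝ →ᵃ[ℝ] Plane) t = t • v +ᵥ p := by
    intro t
    simp [AffineMap.lineMap_apply, vadd_vsub]
  have h' : Wbtw ℝ ta (0 : ℝ) tb := by
    rw [← hinj.wbtw_map_iff]
    simpa only [key, zero_smul, zero_vadd] using h
  have h0 : (0 : ℝ) ∈ segment ℝ ta tb := h'.mem_segment
  rw [segment_eq_uIcc, Set.mem_uIcc] at h0
  tauto

/-- On a collinear subset `S ⊆ P`, a point `p ∈ S` can see at most two points of `S`. -/
lemma visible_le_two {P S : Set Plane} (hS : Collinear ℝ S) (hfin : S.Finite)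
    (hSP : S ⊆ P) {p : Plane} (hp : p ∈ S) :
    {m | m ∈ S ∧ Visible P p m}.ncard ≤ 2 := by
  by_contra hlt
  push_neg at hlt
  have hfin' : {m | m ∈ S ∧ Visible P p m}.Finite := hfin.subset fun x hx => hx.1
  obtain ⟨a, ha, b, hb, c, hc, hab, hac, hbc⟩ := (Set.two_lt_ncard hfin').mp hlt
  obtain ⟨haS, hva⟩ := ha
  obtain ⟨hbS, hvb⟩ := hb
  obtain ⟨hcS, hvc⟩ := hc
  have key : ∀ x y, x ∈ S → y ∈ S → Visible P p x → Visible P p y → x ≠ y →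
      Wbtw ℝ x p y := by
    intro x y hx hy hvx hvy hxy
    have hsub : ({x, p, y} : Set Plane) ⊆ S := by
      intro z hz
      simp only [Set.mem_insert_iff, Set.mem_singleton_iff] at hz
      rcases hz with rfl | rfl | rfl
      · exact hx
      · exact hp
      · exact hy
    have hcol : Collinear ℝ ({x, p, y} : Set Plane) := Collinear.subset hsub hS
    rcases hcol.wbtw_or_wbtw_or_wbtw with h | h | h
    · exact h
    · exact absurd ⟨h, hvy.1.symm, hxy.symm⟩ (hvx.2 y (hSP hy))
    · rw [wbtw_comm] at h
      exact absurd ⟨h, hvx.1.symm, hxy⟩ (hvy.2 x (hSP hx))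
  obtain ⟨v, hv⟩ := (collinear_iff_of_mem hp).mp hS
  obtain ⟨ta, hta⟩ := hv a haS
  obtain ⟨tb, htb⟩ := hv b hbS
  obtain ⟨tc, htc⟩ := hv c hcS
  have hv0 : v ≠ 0 := by
    rintro rfl
    simp only [smul_zero, zero_vadd] at hta
    exact hva.1 hta.symm
  have hta0 : ta ≠ 0 := by
    rintro rfl
    simp only [zero_smul, zero_vadd] at hta
    exact hva.1 hta.symm
  have htb0 : tb ≠ 0 := by
    rintro rfl
    simp only [zero_smul, zero_vadd] at htb
    exact hvb.1 htb.symm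
  have htc0 : tc ≠ 0 := by
    rintro rfl
    simp only [zero_smul, zero_vadd] at htc
    exact hvc.1 htc.symm
  have w1 : Wbtw ℝ (ta • v +ᵥ p) p (tb • v +ᵥ p) := by
    rw [← hta, ← htb]; exact key a b haS hbS hva hvb hab
  have w2 : Wbtw ℝ (tb • v +ᵥ p) p (tc • v +ᵥ p) := by
    rw [← htb, ← htc]; exact key b c hbS hcS hvb hvc hbc
  have w3 : Wbtw ℝ (ta • v +ᵥ p) p (tc • v +ᵥ p) := by
    rw [← hta, ← htc]; exact key a c haS hcS hva hvc hac
  have s1 := sign_aux hv0 w1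
  have s2 := sign_aux hv0 w2
  have s3 := sign_aux hv0 w3
  rcases hta0.lt_or_gt with h7 | h7 <;>
    rcases htb0.lt_or_gt with h8 | h8 <;>
      rcases htc0.lt_or_gt with h9 | h9 <;>
        rcases s1 with ⟨h1, h2⟩ | ⟨h1, h2⟩ <;>
          rcases s2 with ⟨h3, h4⟩ | ⟨h3, h4⟩ <;>
            rcases s3 with ⟨h5, h6⟩ | ⟨h5, h6⟩ <;> linarith

/-- If `p` and `q` are not visible w.r.t. a finite set `P'`, then there is a blocker
strictly between them that is itself visible from `p`. -/
lemma exists_visible_blocker {P' : Set Plane} (hfin : P'.Finite) {p q : Plane}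
    (hpq : p ≠ q) (hnv : ¬ Visible P' p q) :
    ∃ r ∈ P', Visible P' p r ∧ Sbtw ℝ p r q := by
  have hex : ∃ r ∈ P', Sbtw ℝ p r q := by
    by_contra h
    push_neg at h
    exact hnv ⟨hpq, h⟩
  have hBfin : {r | r ∈ P' ∧ Sbtw ℝ p r q}.Finite := hfin.subset fun x hx => hx.1
  have hBne : hBfin.toFinset.Nonempty := by
    obtain ⟨r, hr1, hr2⟩ := hex
    exact ⟨r, by rw [Set.Finite.mem_toFinset]; exact ⟨hr1, hr2⟩⟩
  obtain ⟨r, hrmem, hrmin⟩ := hBfin.toFinset.exists_min_image (fun x => dist x p) hBne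
  rw [Set.Finite.mem_toFinset] at hrmem
  obtain ⟨hrP', hrs⟩ := hrmem
  refine ⟨r, hrP', ⟨hrs.ne_left.symm, ?_⟩, hrs⟩
  intro s hs hsbtw
  have hsB : Sbtw ℝ p s q := hrs.trans_left hsbtw
  have hlt := hsbtw.dist_lt_max_dist p
  rw [dist_self, max_eq_right dist_nonneg] at hlt
  have hle := hrmin s (by rw [Set.Finite.mem_toFinset]; exact ⟨hs, hsB⟩)
  linarith

/-- Part of Lemma 3 of the paper: if a line `L` contains `k` points of `P` and `l`
points of `P` lie off `L`, with `k ≥ (l + 3)²`, then the images under a visibility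
isomorphism of the points of `P` on `L` are collinear. -/
theorem image_of_heavy_line_collinear (P P' : Set Plane)
    (hP : P.Finite) (hP' : P'.Finite)
    (f : Plane → Plane) (hf : VisIso P P' f)
    (L : AffineSubspace ℝ Plane) (hL : IsLine L)
    (k l : ℕ)
    (hk : k = (P ∩ (L : Set Plane)).ncard)
    (hl : l = (P \ (L : Set Plane)).ncard)
    (hkl : (l + 3) ^ 2 ≤ k) :
    Collinear ℝ (f '' (P ∩ (L : Set Plane))) := by
  classical
  obtain ⟨hbij, hiso⟩ := hf
  set S : Set Plane := P ∩ (L : Set Plane) with hSdef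
  set Q : Set Plane := f '' S with hQdef
  show Collinear ℝ Q
  have hSP : S ⊆ P := Set.inter_subset_left
  have hSfin : S.Finite := hP.subset hSP
  -- S is collinear, being a subset of the line L
  have hScol : Collinear ℝ S := by
    rw [collinear_iff_rank_le_one]
    have h1 : vectorSpan ℝ S ≤ L.direction := by
      rw [AffineSubspace.direction_eq_vectorSpan]
      exact vectorSpan_mono ℝ Set.inter_subset_right
    calc Module.rank ℝ (vectorSpan ℝ S) ≤ Module.rank ℝ L.direction :=
          Submodule.rank_mono h1
      _ = 1 := Module.rank_eq_one_iff_finrank_eq_one.mpr hL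
  have hQfin : Q.Finite := hSfin.image f
  have hQP' : Q ⊆ P' := by
    rintro y ⟨x, hx, rfl⟩
    exact hbij.1 (hSP hx)
  have hQcard : Q.ncard = k := by
    rw [hQdef, Set.ncard_image_of_injOn (hbij.2.1.mono hSP), hk]
  have hPcard : P.ncard = k + l := by
    rw [hk, hl]
    exact (Set.ncard_inter_add_ncard_diff_eq_ncard P (L : Set Plane) hP).symm
  have hP'card : P'.ncard = k + l := by
    rw [← hbij.image_eq, Set.ncard_image_of_injOn hbij.2.1, hPcard]
  have hBcard : (P' \ Q).ncard = l := by
    rw [Set.ncard_diff hQP' hQfin, hP'card, hQcard]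
    omega
  -- the set of points visible from y in P'
  set N : Plane → Set Plane := fun y => {n | n ∈ P' ∧ Visible P' y n} with hNdef
  have hNfin : ∀ y, (N y).Finite := fun y => hP'.subset fun x hx => hx.1
  have hNcard : ∀ y ∈ Q, (N y).ncard ≤ l + 2 := by
    rintro y ⟨p, hpS, rfl⟩
    have hWfin : {m | m ∈ S ∧ Visible P p m}.Finite := hSfin.subset fun x hx => hx.1
    have hsub : N (f p) ⊆ (P' \ Q) ∪ f '' {m | m ∈ S ∧ Visible P p m} := by
      rintro n ⟨hnP', hnvis⟩
      by_cases hnQ : n ∈ Q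
      · obtain ⟨m, hmS, rfl⟩ := hnQ
        right
        have hmp : p ≠ m := by
          rintro rfl
          exact hnvis.1 rfl
        have hvm : Visible P p m :=
          (hiso p (hSP hpS) m (hSP hmS) hmp).mpr hnvis
        exact ⟨m, ⟨hmS, hvm⟩, rfl⟩
      · exact Or.inl ⟨hnP', hnQ⟩
    calc (N (f p)).ncard
        ≤ ((P' \ Q) ∪ f '' {m | m ∈ S ∧ Visible P p m}).ncard :=
          Set.ncard_le_ncard hsub ((hP'.diff).union (hWfin.image f))
      _ ≤ (P' \ Q).ncard + (f '' {m | m ∈ S ∧ Visible P p m}).ncard :=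
          Set.ncard_union_le _ _
      _ ≤ l + 2 := by
          have h2 : (f '' {m | m ∈ S ∧ Visible P p m}).ncard ≤ 2 :=
            le_trans (Set.ncard_image_le hWfin) (visible_le_two hScol hSfin hSP hpS)
          have h3 := hBcard
          omega
  -- covering: every other point of Q lies on a line through y and a visible point
  have cover : ∀ y ∈ Q, ∀ x ∈ Q, x ≠ y → ∃ n, n ∈ N y ∧ n ≠ y ∧ x ∈ line[ℝ, y, n] := by
    intro y hy x hx hxy
    by_cases hvis : Visible P' y x
    · exact ⟨x, ⟨hQP' hx, hvis⟩, hxy, right_mem_affineSpan_pair ℝ y x⟩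
    · obtain ⟨r, hrP', hrvis, hrsbtw⟩ := exists_visible_blocker hP' (Ne.symm hxy) hvis
      refine ⟨r, ⟨hrP', hrvis⟩, hrvis.1.symm, ?_⟩
      have hcol : Collinear ℝ ({y, r, x} : Set Plane) := hrsbtw.wbtw.collinear
      exact hcol.mem_affineSpan_of_mem_of_ne (by simp) (by simp) (by simp) hrvis.1
  have hk9 : 9 ≤ k := by
    have h1 : (3 : ℕ) ^ 2 ≤ (l + 3) ^ 2 := Nat.pow_le_pow_left (by omega) 2
    omega
  have hQne : Q.Nonempty := by
    apply Set.nonempty_of_ncard_ne_zero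
    rw [hQcard]; omega
  obtain ⟨a, ha⟩ := hQne
  have hQdfin : (Q \ {a}).Finite := hQfin.subset Set.diff_subset
  -- pigeonhole setup
  have covA : ∀ x : Plane, ∃ n, x ∈ Q \ {a} → n ∈ N a ∧ n ≠ a ∧ x ∈ line[ℝ, a, n] := by
    intro x
    by_cases hx : x ∈ Q \ {a}
    · obtain ⟨n, h⟩ := cover a ha x hx.1 (by simpa using hx.2)
      exact ⟨n, fun _ => h⟩
    · exact ⟨a, fun h => absurd h hx⟩
  choose g hg using covA
  have hmaps : ∀ x ∈ hQdfin.toFinset, g x ∈ (hNfin a).toFinset := by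
    intro x hx
    rw [Set.Finite.mem_toFinset] at hx ⊢
    exact (hg x hx).1
  have h1 : (Q \ {a}).ncard = k - 1 := by
    rw [Set.ncard_diff (Set.singleton_subset_iff.mpr ha) (Set.finite_singleton a),
      hQcard, Set.ncard_singleton]
  have hsCard : hQdfin.toFinset.card = k - 1 := by
    rw [← Set.ncard_eq_toFinset_card _ hQdfin, h1]
  have htCard : (hNfin a).toFinset.card ≤ l + 2 := by
    rw [← Set.ncard_eq_toFinset_card _ (hNfin a)]
    exact hNcard a ha
  have hsne : hQdfin.toFinset.Nonempty := by
    rw [← Finset.card_pos, hsCard]; omega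
  have htne : (hNfin a).toFinset.Nonempty := by
    obtain ⟨x, hx⟩ := hsne
    exact ⟨g x, hmaps x hx⟩
  have hmul : (hNfin a).toFinset.card * (l + 4) ≤ hQdfin.toFinset.card := by
    rw [hsCard]
    have he : (l + 3) ^ 2 = (l + 2) * (l + 4) + 1 := by ring
    have h2 : (hNfin a).toFinset.card * (l + 4) ≤ (l + 2) * (l + 4) :=
      Nat.mul_le_mul_right _ htCard
    omega
  obtain ⟨n, hntF, hfiber⟩ :=
    Finset.exists_le_card_fiber_of_mul_le_card_of_maps_to hmaps htne hmul
  set T : Finset Plane := hQdfin.toFinset.filter (fun x => g x = n) with hT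
  have hTprop : ∀ x ∈ T, x ∈ Q \ {a} ∧ x ∈ line[ℝ, a, n] := by
    intro x hx
    rw [hT, Finset.mem_filter] at hx
    obtain ⟨hxs, hxg⟩ := hx
    rw [Set.Finite.mem_toFinset] at hxs
    exact ⟨hxs, by rw [← hxg]; exact (hg x hxs).2.2⟩
  have hTcard : l + 4 ≤ T.card := hfiber
  have hTne : T.Nonempty := Finset.card_pos.mp (by omega)
  by_cases hall : ∀ x ∈ Q, x ∈ line[ℝ, a, n]
  · -- all of Q lies on line[a, n] : Q is collinear
    rw [collinear_iff_of_mem ha]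
    refine ⟨n -ᵥ a, ?_⟩
    intro x hx
    have hx' : (x -ᵥ a) +ᵥ a ∈ line[ℝ, a, n] := by
      rw [vsub_vadd]; exact hall x hx
    obtain ⟨r, hr⟩ := vadd_left_mem_affineSpan_pair.mp hx'
    exact ⟨r, by rw [hr, vsub_vadd]⟩
  · push_neg at hall
    obtain ⟨y, hyQ, hyline⟩ := hall
    exfalso
    have covY : ∀ x : Plane, ∃ m, x ∈ Q \ {y} → m ∈ N y ∧ m ≠ y ∧ x ∈ line[ℝ, y, m] := by
      intro x
      by_cases hx : x ∈ Q \ {y}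
      · obtain ⟨m, h⟩ := cover y hyQ x hx.1 (by simpa using hx.2)
        exact ⟨m, fun _ => h⟩
      · exact ⟨y, fun h => absurd h hx⟩
    choose g' hg' using covY
    have hxT : ∀ x ∈ T, x ∈ Q \ {y} := by
      intro x hx
      obtain ⟨hxQd, hxline⟩ := hTprop x hx
      refine ⟨hxQd.1, ?_⟩
      simp only [Set.mem_singleton_iff]
      rintro rfl
      exact hyline hxline
    have hmaps' : ∀ x ∈ T, g' x ∈ (hNfin y).toFinset := by
      intro x hx
      rw [Set.Finite.mem_toFinset]
      exact (hg' x (hxT x hx)).1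
    have hinj : Set.InjOn g' ↑T := by
      intro x hx x' hx' heq
      by_contra hne
      rw [Finset.mem_coe] at hx hx'
      have h1 := (hg' x (hxT x hx)).2.2
      have h2 := (hg' x' (hxT x' hx')).2.2
      rw [heq] at h1
      have hcol4 : Collinear ℝ ({x, x', y, g' x'} : Set Plane) :=
        collinear_insert_insert_of_mem_affineSpan_pair h1 h2
      have hyx : y ∈ line[ℝ, x, x'] :=
        hcol4.mem_affineSpan_of_mem_of_ne (by simp) (by simp) (by simp) hne
      have hxa : x ∈ line[ℝ, a, n] := (hTprop x hx).2
      have hx'a : x' ∈ line[ℝ, a, n] := (hTprop x' hx').2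
      have hle : line[ℝ, x, x'] ≤ line[ℝ, a, n] :=
        affineSpan_pair_le_of_mem_of_mem hxa hx'a
      exact hyline (hle hyx)
    have hcardle : T.card ≤ (hNfin y).toFinset.card :=
      Finset.card_le_card_of_injOn g' hmaps' hinj
    have hNyCard : (hNfin y).toFinset.card ≤ l + 2 := by
      rw [← Set.ncard_eq_toFinset_card _ (hNfin y)]
      exact hNcard y hyQ
    omega
end

section
/- Let P and P' be finite sets of points in the Euclidean plane ℝ² and let f : P → P' be a visibility isomorphism. Let L be a line, let k be the number of points of P on L and l the number of points of P not on L, and suppose k ≥ (l + 3)². Then no point of P' outside the image set f(P ∩ L) lies on the line spanned by f(P ∩ L); that is, if L' is the affine span of f(P ∩ L) (which is a line, since f(P ∩ L) is collinear and contains at least two points), then P' ∩ L' = f(P ∩ L). -/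
open Set AffineMap

lemma collinear_coe_affineSpan {s : Set Plane} (hs : Collinear ℝ s) :
    Collinear ℝ ((affineSpan ℝ s : AffineSubspace ℝ Plane) : Set Plane) := by
  have h : vectorSpan ℝ ((affineSpan ℝ s : AffineSubspace ℝ Plane) : Set Plane)
      = vectorSpan ℝ s := by
    rw [← direction_affineSpan ℝ ((affineSpan ℝ s : AffineSubspace ℝ Plane) : Set Plane),
      AffineSubspace.affineSpan_coe, direction_affineSpan]
  rw [collinear_iff_rank_le_one, h]
  exact hs

lemma collinear_coe_span_pair (x y : Plane) :
    Collinear ℝ ((affineSpan ℝ {x, y} : AffineSubspace ℝ Plane) : Set Plane) :=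
  collinear_coe_affineSpan (collinear_pair ℝ x y)

lemma collinear_line {L : AffineSubspace ℝ Plane} (hL : IsLine L) :
    Collinear ℝ (L : Set Plane) := by
  rw [collinear_iff_rank_le_one]
  have h : vectorSpan ℝ (L : Set Plane) = L.direction := by
    rw [← direction_affineSpan ℝ (L : Set Plane), AffineSubspace.affineSpan_coe]
  rw [h]
  have h2 : Module.rank ℝ L.direction = (Module.finrank ℝ L.direction : Cardinal) :=
    (Module.finrank_eq_rank ℝ _).symm
  rw [h2, hL]
  exact_mod_cast le_refl _

lemma wbtw_mem_span {x z y : Plane} (h : Wbtw ℝ x z y) (hzx : z ≠ x) :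
    y ∈ affineSpan ℝ ({x, z} : Set Plane) := by
  rcases eq_or_ne y z with rfl | hyz
  · exact right_mem_affineSpan_pair ℝ x y
  · exact h.collinear.mem_affineSpan_of_mem_of_ne (by simp) (by simp) (by simp) hzx.symm

lemma sbtw_left_mem_span {x z y : Plane} (h : Sbtw ℝ x z y) :
    x ∈ affineSpan ℝ ({z, y} : Set Plane) :=
  h.wbtw.collinear.mem_affineSpan_of_mem_of_ne (by simp) (by simp) (by simp) h.ne_right

lemma exists_first_visible {S : Set Plane} (hS : S.Finite) {x y : Plane}
    (hy : y ∈ S) (hxy : y ≠ x) :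
    ∃ z ∈ S, Visible S x z ∧ Wbtw ℝ x z y ∧ z ≠ x := by
  classical
  set T : Set Plane := {w | w ∈ S ∧ Wbtw ℝ x w y ∧ w ≠ x} with hT
  have hTfin : T.Finite := hS.subset fun w hw => hw.1
  have hyT : y ∈ T := ⟨hy, wbtw_self_right ℝ x y, hxy⟩
  obtain ⟨z, hzT, hzmin⟩ :=
    hTfin.toFinset.exists_min_image (fun w => dist x w) ⟨y, hTfin.mem_toFinset.2 hyT⟩
  rw [hTfin.mem_toFinset] at hzT
  refine ⟨z, hzT.1, ⟨hzT.2.2.symm, ?_⟩, hzT.2.1, hzT.2.2⟩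
  intro r hr hsb
  have hrT : r ∈ T := ⟨hr, (hzT.2.1).trans_left hsb.wbtw, hsb.ne_left⟩
  have hlt : dist x r < dist x z := by
    have hadd := hsb.wbtw.dist_add_dist
    have : (0 : ℝ) < dist r z := dist_pos.2 hsb.ne_right
    linarith
  exact absurd (hzmin r (hTfin.mem_toFinset.2 hrT)) (not_le.2 hlt)

lemma real_star_pos {a b : ℝ} (hpa : 0 < a) (hpb : 0 < b) (hab : a ≠ b)
    (n1 : ¬ Sbtw ℝ (0 : ℝ) a b) (n2 : ¬ Sbtw ℝ (0 : ℝ) b a) : False := by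
  have key : ∀ s t : ℝ, s ∈ Set.uIcc 0 t → s ≠ 0 → s ≠ t → Sbtw ℝ (0 : ℝ) s t := by
    intro s t hm hs hst
    exact ⟨by rwa [← mem_segment_iff_wbtw, segment_eq_uIcc], hs, hst⟩
  rcases le_total a b with h | h
  · exact n1 (key a b (Set.mem_uIcc.2 (Or.inl ⟨hpa.le, h⟩)) hpa.ne' hab)
  · exact n2 (key b a (Set.mem_uIcc.2 (Or.inl ⟨hpb.le, h⟩)) hpb.ne' (Ne.symm hab))

lemma real_star_neg {a b : ℝ} (hpa : a < 0) (hpb : b < 0) (hab : a ≠ b)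
    (n1 : ¬ Sbtw ℝ (0 : ℝ) a b) (n2 : ¬ Sbtw ℝ (0 : ℝ) b a) : False := by
  have key : ∀ s t : ℝ, s ∈ Set.uIcc 0 t → s ≠ 0 → s ≠ t → Sbtw ℝ (0 : ℝ) s t := by
    intro s t hm hs hst
    exact ⟨by rwa [← mem_segment_iff_wbtw, segment_eq_uIcc], hs, hst⟩
  rcases le_total a b with h | h
  · exact n2 (key b a (Set.mem_uIcc.2 (Or.inr ⟨h, hpb.le⟩)) hpb.ne (Ne.symm hab))
  · exact n1 (key a b (Set.mem_uIcc.2 (Or.inr ⟨h, hpa.le⟩)) hpa.ne hab)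

lemma real_star {a b c : ℝ} (ha : a ≠ 0) (hb : b ≠ 0) (hc : c ≠ 0)
    (hab : a ≠ b) (hac : a ≠ c) (hbc : b ≠ c)
    (n1 : ¬ Sbtw ℝ (0 : ℝ) a b) (n2 : ¬ Sbtw ℝ (0 : ℝ) b a)
    (n3 : ¬ Sbtw ℝ (0 : ℝ) a c) (n4 : ¬ Sbtw ℝ (0 : ℝ) c a)
    (n5 : ¬ Sbtw ℝ (0 : ℝ) b c) (n6 : ¬ Sbtw ℝ (0 : ℝ) c b) : False := by
  rcases ha.lt_or_gt with ha' | ha' <;> rcases hb.lt_or_gt with hb' | hb' <;>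
    rcases hc.lt_or_gt with hc' | hc'
  · exact real_star_neg ha' hb' hab n1 n2
  · exact real_star_neg ha' hb' hab n1 n2
  · exact real_star_neg ha' hc' hac n3 n4
  · exact real_star_pos hb' hc' hbc n5 n6
  · exact real_star_neg hb' hc' hbc n5 n6
  · exact real_star_pos ha' hc' hac n3 n4
  · exact real_star_pos ha' hb' hab n1 n2
  · exact real_star_pos ha' hb' hab n1 n2

lemma not_collinear_three_visible {S : Set Plane} {x y₁ y₂ y₃ : Plane}
    (hy₁ : y₁ ∈ S) (hy₂ : y₂ ∈ S) (hy₃ : y₃ ∈ S)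
    (v₁ : Visible S x y₁) (v₂ : Visible S x y₂) (v₃ : Visible S x y₃)
    (h12 : y₁ ≠ y₂) (h13 : y₁ ≠ y₃) (h23 : y₂ ≠ y₃)
    (hcol : Collinear ℝ ({x, y₁, y₂, y₃} : Set Plane)) : False := by
  classical
  have hx : x ∈ ({x, y₁, y₂, y₃} : Set Plane) := by simp
  obtain ⟨v, hv⟩ := (collinear_iff_of_mem hx).1 hcol
  obtain ⟨r₁, hr₁⟩ := hv y₁ (by simp)
  obtain ⟨r₂, hr₂⟩ := hv y₂ (by simp)
  obtain ⟨r₃, hr₃⟩ := hv y₃ (by simp)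
  have hv0 : v ≠ 0 := by
    rintro rfl
    apply h12
    rw [hr₁, hr₂]; simp
  set φ : ℝ →ᵃ[ℝ] Plane := AffineMap.lineMap x (v +ᵥ x) with hφdef
  have hφinj : Function.Injective φ := by
    apply AffineMap.lineMap_injective
    intro h
    apply hv0
    have h2 : v +ᵥ x = (0 : EuclideanSpace ℝ (Fin 2)) +ᵥ x := by
      rw [zero_vadd]; exact h.symm
    exact vadd_right_cancel x h2
  have hφ : ∀ r : ℝ, φ r = r • v +ᵥ x := by
    intro r
    rw [hφdef, AffineMap.lineMap_apply, vadd_vsub]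
  have hx0 : x = φ 0 := by rw [hφ]; simp
  have hy₁' : y₁ = φ r₁ := by rw [hφ]; exact hr₁
  have hy₂' : y₂ = φ r₂ := by rw [hφ]; exact hr₂
  have hy₃' : y₃ = φ r₃ := by rw [hφ]; exact hr₃
  have hsb : ∀ s t : ℝ, Sbtw ℝ (0 : ℝ) s t ↔ Sbtw ℝ (φ 0) (φ s) (φ t) :=
    fun s t => (hφinj.sbtw_map_iff).symm
  have hne : ∀ s t : ℝ, φ s ≠ φ t → s ≠ t := fun s t h => fun he => h (by rw [he])
  have hr₁0 : r₁ ≠ 0 := hne _ _ (by rw [← hy₁', ← hx0]; exact v₁.1.symm)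
  have hr₂0 : r₂ ≠ 0 := hne _ _ (by rw [← hy₂', ← hx0]; exact v₂.1.symm)
  have hr₃0 : r₃ ≠ 0 := hne _ _ (by rw [← hy₃', ← hx0]; exact v₃.1.symm)
  have hr12 : r₁ ≠ r₂ := hne _ _ (by rw [← hy₁', ← hy₂']; exact h12)
  have hr13 : r₁ ≠ r₃ := hne _ _ (by rw [← hy₁', ← hy₃']; exact h13)
  have hr23 : r₂ ≠ r₃ := hne _ _ (by rw [← hy₂', ← hy₃']; exact h23)
  refine real_star hr₁0 hr₂0 hr₃0 hr12 hr13 hr23 ?_ ?_ ?_ ?_ ?_ ?_ <;>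
    rw [hsb] <;> rw [← hx0]
  · rw [← hy₁', ← hy₂']; exact fun h => v₂.2 y₁ hy₁ h
  · rw [← hy₂', ← hy₁']; exact fun h => v₁.2 y₂ hy₂ h
  · rw [← hy₁', ← hy₃']; exact fun h => v₃.2 y₁ hy₁ h
  · rw [← hy₃', ← hy₁']; exact fun h => v₁.2 y₃ hy₃ h
  · rw [← hy₂', ← hy₃']; exact fun h => v₃.2 y₂ hy₂ h
  · rw [← hy₃', ← hy₂']; exact fun h => v₂.2 y₃ hy₃ h

lemma exists_three_distinct {s : Set Plane} (hs : s.Finite) (h : 2 < s.ncard) :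
    ∃ a ∈ s, ∃ b ∈ s, ∃ c ∈ s, a ≠ b ∧ a ≠ c ∧ b ≠ c := by
  rw [ncard_eq_toFinset_card s hs] at h
  obtain ⟨a, ha, b, hb, c, hc, h1, h2, h3⟩ := Finset.two_lt_card.1 h
  rw [hs.mem_toFinset] at ha hb hc
  exact ⟨a, ha, b, hb, c, hc, h1, h2, h3⟩

lemma exists_two_distinct {s : Set Plane} (hs : s.Finite) (h : 1 < s.ncard) :
    ∃ a ∈ s, ∃ b ∈ s, a ≠ b := by
  rw [ncard_eq_toFinset_card s hs] at h
  obtain ⟨a, ha, b, hb, h1⟩ := Finset.one_lt_card.1 h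
  rw [hs.mem_toFinset] at ha hb
  exact ⟨a, ha, b, hb, h1⟩

/-- At most two points of a collinear set `W` (with `x`) can be visible from `x`. -/
lemma ncard_visible_le_two {S W : Set Plane} {x : Plane} (hW : W.Finite)
    (hsub : ∀ y ∈ W, y ∈ S ∧ Visible S x y)
    (hcol : Collinear ℝ (insert x W)) : W.ncard ≤ 2 := by
  by_contra h
  push_neg at h
  obtain ⟨y₁, hy₁, y₂, hy₂, y₃, hy₃, h12, h13, h23⟩ := exists_three_distinct hW h
  exact not_collinear_three_visible (hsub y₁ hy₁).1 (hsub y₂ hy₂).1 (hsub y₃ hy₃).1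
    (hsub y₁ hy₁).2 (hsub y₂ hy₂).2 (hsub y₃ hy₃).2 h12 h13 h23
    (hcol.subset (by
      intro p hp
      rcases hp with rfl | rfl | rfl | rfl
      · exact mem_insert _ _
      · exact mem_insert_of_mem _ hy₁
      · exact mem_insert_of_mem _ hy₂
      · exact mem_insert_of_mem _ hy₃))

/-- Part of Lemma 3 of the paper: if a line `L` contains `k` points of `P` and `l`
points of `P` lie off `L`, with `k ≥ (l + 3)²`, then no point of `P'` outside
`f(P ∩ L)` lies on the affine span of `f(P ∩ L)`, i.e.
`P' ∩ affineSpan (f(P ∩ L)) = f(P ∩ L)`. -/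
theorem no_extra_point_on_image_line (P P' : Set Plane)
    (hP : P.Finite) (hP' : P'.Finite)
    (f : Plane → Plane) (hf : VisIso P P' f)
    (L : AffineSubspace ℝ Plane) (hL : IsLine L)
    (k l : ℕ)
    (hk : k = (P ∩ (L : Set Plane)).ncard)
    (hl : l = (P \ (L : Set Plane)).ncard)
    (hkl : (l + 3) ^ 2 ≤ k) :
    P' ∩ (affineSpan ℝ (f '' (P ∩ (L : Set Plane))) : Set Plane) =
      f '' (P ∩ (L : Set Plane)) := by
  classical
  obtain ⟨hbij, hiff⟩ := hf
  have finj := hbij.injOn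
  set A : Set Plane := P ∩ (L : Set Plane) with hAdef
  set B : Set Plane := P \ (L : Set Plane) with hBdef
  have hAfin : A.Finite := hP.subset inter_subset_left
  have hBfin : B.Finite := hP.subset diff_subset
  have hAP : A ⊆ P := inter_subset_left
  have hAL : A ⊆ (L : Set Plane) := inter_subset_right
  have hAcol : Collinear ℝ A := (collinear_line hL).subset hAL
  have hk9 : 9 ≤ k := le_trans (by nlinarith) hkl
  have hkA : A.ncard = k := hk.symm
  have hlB : B.ncard = l := hl.symm
  -- the image description of visible sets
  have himage : ∀ x ∈ P, {y ∈ P' | Visible P' (f x) y} = f '' {y ∈ P | Visible P x y} := by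
    intro x hx
    ext y
    constructor
    · rintro ⟨hyP', hvis⟩
      obtain ⟨w, hw, rfl⟩ := hbij.surjOn hyP'
      have hne : x ≠ w := by
        rintro rfl; exact hvis.1 rfl
      exact ⟨w, ⟨hw, (hiff x hx w hw hne).2 hvis⟩, rfl⟩
    · rintro ⟨w, ⟨hw, hvis⟩, rfl⟩
      exact ⟨hbij.mapsTo hw, (hiff x hx w hw hvis.1).1 hvis⟩
  -- visible sets within P decomposition
  have hPsub : ∀ x : Plane, {y ∈ P | Visible P x y} ⊆ {y ∈ A | Visible P x y} ∪ B := by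
    intro x y hy
    by_cases hyL : y ∈ (L : Set Plane)
    · exact Or.inl ⟨⟨hy.1, hyL⟩, hy.2⟩
    · exact Or.inr ⟨hy.1, hyL⟩
  have hVA2 : ∀ a ∈ A, {y ∈ A | Visible P a y}.ncard ≤ 2 := by
    intro a ha
    refine ncard_visible_le_two (hAfin.subset (sep_subset _ _))
      (fun y hy => ⟨hAP hy.1, hy.2⟩) ?_
    refine (collinear_line hL).subset ?_
    intro p hp
    rcases hp with rfl | hp
    · exact hAL ha
    · exact hAL hp.1
  have hdeg : ∀ a ∈ A, {y ∈ P | Visible P a y}.ncard ≤ l + 2 := by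
    intro a ha
    calc {y ∈ P | Visible P a y}.ncard
        ≤ ({y ∈ A | Visible P a y} ∪ B).ncard :=
          ncard_le_ncard (hPsub a) ((hAfin.subset (sep_subset _ _)).union hBfin)
      _ ≤ {y ∈ A | Visible P a y}.ncard + B.ncard := ncard_union_le _ _
      _ ≤ 2 + l := add_le_add (hVA2 a ha) hlB.le
      _ = l + 2 := by omega
  -- choose the extreme point a₀ of A
  have hAne : A.Nonempty := by
    rw [← ncard_pos hAfin, hkA]; omega
  obtain ⟨p₀, hp₀⟩ := hAne
  obtain ⟨v, hv⟩ := (collinear_iff_of_mem hp₀).1 hAcol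
  set g : Plane → ℝ := fun p => if h : ∃ r : ℝ, p = r • v +ᵥ p₀ then h.choose else 0 with hgdef
  have hg : ∀ a ∈ A, a = g a • v +ᵥ p₀ := by
    intro a ha
    obtain ⟨r, hr⟩ := hv a ha
    have hex : ∃ r : ℝ, a = r • v +ᵥ p₀ := ⟨r, hr⟩
    simp only [hgdef, dif_pos hex]
    exact hex.choose_spec
  obtain ⟨a₀, ha₀A', ha₀max'⟩ :=
    hAfin.toFinset.exists_max_image g ⟨p₀, hAfin.mem_toFinset.2 hp₀⟩
  rw [hAfin.mem_toFinset] at ha₀A'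
  have ha₀max : ∀ a ∈ A, g a ≤ g a₀ := fun a ha => ha₀max' a (hAfin.mem_toFinset.2 ha)
  have ha₀A : a₀ ∈ A := ha₀A'
  -- a₀ sees at most one point of A
  have h1vis : {y ∈ A | Visible P a₀ y}.ncard ≤ 1 := by
    by_contra h
    push_neg at h
    obtain ⟨y₁, hy₁, y₂, hy₂, h12⟩ :=
      exists_two_distinct (hAfin.subset (sep_subset _ _)) h
    obtain ⟨hy₁A, v₁⟩ := hy₁
    obtain ⟨hy₂A, v₂⟩ := hy₂
    have hcol3 : Collinear ℝ ({a₀, y₁, y₂} : Set Plane) := by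
      refine (collinear_line hL).subset ?_
      intro p hp
      rcases hp with rfl | rfl | rfl
      · exact hAL ha₀A
      · exact hAL hy₁A
      · exact hAL hy₂A
    rcases hcol3.wbtw_or_wbtw_or_wbtw with hw | hw | hw
    · exact v₂.2 y₁ (hAP hy₁A) ⟨hw, v₁.1.symm, h12⟩
    · exact v₁.2 y₂ (hAP hy₂A) ⟨hw.symm, v₂.1.symm, Ne.symm h12⟩
    · -- Wbtw y₂ a₀ y₁ contradicts maximality of g a₀
      have hsb : Sbtw ℝ y₂ a₀ y₁ := ⟨hw, v₂.1, v₁.1⟩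
      have hv0 : v ≠ 0 := by
        rintro rfl
        apply h12
        rw [hg y₁ hy₁A, hg y₂ hy₂A]; simp
      set φ : ℝ →ᵃ[ℝ] Plane := AffineMap.lineMap p₀ (v +ᵥ p₀) with hφdef
      have hφinj : Function.Injective φ := by
        apply AffineMap.lineMap_injective
        intro h'
        apply hv0
        have h2 : v +ᵥ p₀ = (0 : EuclideanSpace ℝ (Fin 2)) +ᵥ p₀ := by
          rw [zero_vadd]; exact h'.symm
        exact vadd_right_cancel p₀ h2
      have hφ : ∀ r : ℝ, φ r = r • v +ᵥ p₀ := by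
        intro r
        rw [hφdef, AffineMap.lineMap_apply, vadd_vsub]
      have hsbr : Sbtw ℝ (g y₂) (g a₀) (g y₁) := by
        have : Sbtw ℝ (φ (g y₂)) (φ (g a₀)) (φ (g y₁)) := by
          rw [hφ, hφ, hφ, ← hg y₂ hy₂A, ← hg a₀ ha₀A, ← hg y₁ hy₁A]
          exact hsb
        exact hφinj.sbtw_map_iff.1 this
      have hmem : g a₀ ∈ Set.uIcc (g y₂) (g y₁) := by
        rw [← segment_eq_uIcc]
        exact mem_segment_iff_wbtw.2 hsbr.wbtw
      rcases Set.mem_uIcc.1 hmem with ⟨hle1, hle2⟩ | ⟨hle1, hle2⟩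
      · exact hsbr.ne_right (le_antisymm hle2 (ha₀max y₁ hy₁A))
      · exact hsbr.ne_left (le_antisymm hle2 (ha₀max y₂ hy₂A))
  have hVa₀ : {y ∈ P | Visible P a₀ y}.ncard ≤ l + 1 := by
    calc {y ∈ P | Visible P a₀ y}.ncard
        ≤ ({y ∈ A | Visible P a₀ y} ∪ B).ncard :=
          ncard_le_ncard (hPsub a₀) ((hAfin.subset (sep_subset _ _)).union hBfin)
      _ ≤ {y ∈ A | Visible P a₀ y}.ncard + B.ncard := ncard_union_le _ _
      _ ≤ 1 + l := add_le_add h1vis hlB.le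
      _ = l + 1 := by omega
  -- visible set of f a₀ in P'
  set V1 : Set Plane := {y ∈ P' | Visible P' (f a₀) y} with hV1def
  have hV1fin : V1.Finite := hP'.subset (sep_subset _ _)
  have hV1card : V1.ncard ≤ l + 1 := by
    rw [hV1def, himage a₀ (hAP ha₀A)]
    exact le_trans (ncard_image_le (hP.subset (sep_subset _ _))) hVa₀
  -- pigeonhole: a popular line through f a₀
  set D : Set Plane := A \ {a₀} with hDdef
  have hDfin : D.Finite := hAfin.diff
  have hDcard : D.ncard = k - 1 := by
    rw [hDdef, ncard_diff (singleton_subset_iff.2 ha₀A) (finite_singleton _), hkA,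
      ncard_singleton]
  have hzex : ∀ a ∈ D, ∃ u, u ∈ V1 ∧ f a ∈ (affineSpan ℝ {f a₀, u} : Set Plane) := by
    intro a haD
    have haA : a ∈ A := haD.1
    have hfa : f a ∈ P' := hbij.mapsTo (hAP haA)
    have hne : f a ≠ f a₀ := by
      intro h
      exact haD.2 (by
        have := finj (hAP haA) (hAP ha₀A) h
        simp [this])
    obtain ⟨u, huP', huvis, huw, hune⟩ := exists_first_visible hP' hfa hne
    exact ⟨u, ⟨huP', huvis⟩, wbtw_mem_span huw hune⟩
  choose! z hzV1 hzspan using hzex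
  have hDne : D.Nonempty := by
    rw [← ncard_pos hDfin, hDcard]; omega
  have hmapsfin : ∀ a ∈ hDfin.toFinset, z a ∈ hV1fin.toFinset := by
    intro a ha
    rw [hDfin.mem_toFinset] at ha
    rw [hV1fin.mem_toFinset]
    exact hzV1 a ha
  have hV1ne : hV1fin.toFinset.Nonempty := by
    obtain ⟨a, ha⟩ := hDne
    exact ⟨z a, hmapsfin a (hDfin.mem_toFinset.2 ha)⟩
  have hcardineq : hV1fin.toFinset.card * (l + 4) ≤ hDfin.toFinset.card := by
    rw [← ncard_eq_toFinset_card D hDfin, ← ncard_eq_toFinset_card V1 hV1fin, hDcard]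
    calc V1.ncard * (l + 4) ≤ (l + 1) * (l + 4) := by
          exact Nat.mul_le_mul_right _ hV1card
      _ ≤ k - 1 := by nlinarith [Nat.sub_add_cancel (by omega : 1 ≤ k)]
  obtain ⟨w₀, hw₀V1, hw₀card⟩ :=
    Finset.exists_le_card_fiber_of_mul_le_card_of_maps_to hmapsfin hV1ne hcardineq
  rw [hV1fin.mem_toFinset] at hw₀V1
  set M : AffineSubspace ℝ Plane := affineSpan ℝ {f a₀, w₀} with hMdef
  set C : Set Plane := {a ∈ A | f a ∈ (M : Set Plane)} with hCdef
  have hCfin : C.Finite := hAfin.subset (sep_subset _ _)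
  have hCcard : l + 5 ≤ C.ncard := by
    have hsub2 : insert a₀ {x ∈ hDfin.toFinset | z x = w₀} ⊆ hCfin.toFinset := by
      intro a ha
      rw [Finset.mem_insert] at ha
      rw [hCfin.mem_toFinset]
      rcases ha with rfl | ha
      · exact ⟨ha₀A, left_mem_affineSpan_pair ℝ _ _⟩
      · rw [Finset.mem_filter, hDfin.mem_toFinset] at ha
        refine ⟨ha.1.1, ?_⟩
        have := hzspan a ha.1
        rwa [ha.2] at this
    have hnotmem : a₀ ∉ {x ∈ hDfin.toFinset | z x = w₀} := by
      rw [Finset.mem_filter, hDfin.mem_toFinset]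
      rintro ⟨⟨-, h⟩, -⟩
      exact h rfl
    have := Finset.card_le_card hsub2
    rw [Finset.card_insert_of_notMem hnotmem] at this
    rw [ncard_eq_toFinset_card C hCfin]
    omega
  -- all of f '' A lies on M
  have hallM : ∀ a ∈ A, f a ∈ (M : Set Plane) := by
    intro a₁ ha₁
    by_contra hxM
    set x : Plane := f a₁ with hxdef
    have hxP' : x ∈ P' := hbij.mapsTo (hAP ha₁)
    have hVx : {y ∈ P' | Visible P' x y}.ncard ≤ l + 2 := by
      rw [hxdef, himage a₁ (hAP ha₁)]
      exact le_trans (ncard_image_le (hP.subset (sep_subset _ _))) (hdeg a₁ ha₁)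
    set Y : Set Plane := f '' C with hYdef
    have hYfin : Y.Finite := hCfin.image f
    have hYcard : Y.ncard = C.ncard := ncard_image_of_injOn (finj.mono (fun c hc => hAP hc.1))
    have hYP' : Y ⊆ P' := by
      rintro _ ⟨c, hc, rfl⟩
      exact hbij.mapsTo (hAP hc.1)
    have hYM : ∀ y ∈ Y, y ∈ (M : Set Plane) := by
      rintro _ ⟨c, hc, rfl⟩
      exact hc.2
    have hYnx : ∀ y ∈ Y, y ≠ x := by
      intro y hy h
      exact hxM (h ▸ hYM y hy)
    have hζex : ∀ y, (y ∈ P' ∧ y ≠ x ∧ ¬ Visible P' x y) →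
        ∃ u, (u ∈ P' ∧ Visible P' x u) ∧ Wbtw ℝ x u y ∧ u ≠ x ∧ u ≠ y := by
      rintro y ⟨hyP', hynx, hnv⟩
      obtain ⟨u, huP', huvis, huw, hune⟩ := exists_first_visible hP' hyP' hynx
      refine ⟨u, ⟨huP', huvis⟩, huw, hune, ?_⟩
      rintro rfl
      exact hnv huvis
    choose! ζ hζ using hζex
    set Φ : Plane → Plane := fun y => if Visible P' x y then y else ζ y with hΦdef
    have hΦpos : ∀ y, Visible P' x y → Φ y = y := by
      intro y h; simp only [hΦdef]; rw [if_pos h]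
    have hΦneg : ∀ y, ¬ Visible P' x y → Φ y = ζ y := by
      intro y h; simp only [hΦdef]; rw [if_neg h]
    have hΦmem : ∀ y ∈ Y, Φ y ∈ {y' ∈ P' | Visible P' x y'} := by
      intro y hy
      by_cases hvis : Visible P' x y
      · rw [hΦpos y hvis]
        exact ⟨hYP' hy, hvis⟩
      · rw [hΦneg y hvis]
        obtain ⟨⟨h1, h2⟩, -, -, -⟩ := hζ y ⟨hYP' hy, hYnx y hy, hvis⟩
        exact ⟨h1, h2⟩
    have hζnotM : ∀ y ∈ Y, ¬ Visible P' x y → ζ y ∉ (M : Set Plane) := by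
      intro y hy hnv hζM
      obtain ⟨⟨-, -⟩, hw, hne1, hne2⟩ := hζ y ⟨hYP' hy, hYnx y hy, hnv⟩
      have hsb : Sbtw ℝ x (ζ y) y := ⟨hw, hne1, hne2⟩
      have hxmem := sbtw_left_mem_span hsb
      have hle : affineSpan ℝ ({ζ y, y} : Set Plane) ≤ M := by
        apply affineSpan_le.2
        intro p hp
        rcases hp with rfl | hp2
        · exact hζM
        · rw [hp2]; exact hYM y hy
      exact hxM (hle hxmem)
    have hζspan : ∀ y ∈ Y, ¬ Visible P' x y →
        y ∈ (affineSpan ℝ ({x, ζ y} : Set Plane) : Set Plane) := by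
      intro y hy hnv
      obtain ⟨⟨-, -⟩, hw, hne1, hne2⟩ := hζ y ⟨hYP' hy, hYnx y hy, hnv⟩
      exact wbtw_mem_span hw hne1
    have hΦinj : InjOn Φ Y := by
      intro y hy y' hy' heq
      by_cases h1 : Visible P' x y <;> by_cases h2 : Visible P' x y'
      · rwa [hΦpos y h1, hΦpos y' h2] at heq
      · exfalso
        rw [hΦpos y h1, hΦneg y' h2] at heq
        exact hζnotM y' hy' h2 (heq ▸ hYM y hy)
      · exfalso
        rw [hΦneg y h1, hΦpos y' h2] at heq
        exact hζnotM y hy h1 (heq ▸ hYM y' hy')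
      · rw [hΦneg y h1, hΦneg y' h2] at heq
        by_contra hne'
        have hm1 := hζspan y hy h1
        have hm2 := hζspan y' hy' h2
        rw [heq] at hm1
        have hcolM := collinear_coe_span_pair x (ζ y')
        have hxin : x ∈ (affineSpan ℝ ({y, y'} : Set Plane) : Set Plane) := by
          refine hcolM.mem_affineSpan_of_mem_of_ne hm1 hm2
            (left_mem_affineSpan_pair ℝ _ _) hne'
        have hle : affineSpan ℝ ({y, y'} : Set Plane) ≤ M := by
          apply affineSpan_le.2
          intro p hp
          rcases hp with hp2 | hp2 <;> rw [hp2]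
          · exact hYM y hy
          · exact hYM y' hy'
        exact hxM (hle hxin)
    have hfinal := ncard_le_ncard_of_injOn Φ hΦmem hΦinj (hP'.subset (sep_subset _ _))
    rw [hYcard] at hfinal
    omega
  -- conclusion
  apply Subset.antisymm
  · rintro y ⟨hyP', hyspan⟩
    obtain ⟨w, hwP, rfl⟩ := hbij.surjOn hyP'
    by_cases hwL : w ∈ (L : Set Plane)
    · exact mem_image_of_mem f ⟨hwP, hwL⟩
    exfalso
    have hwB : w ∈ B := ⟨hwP, hwL⟩
    have hspanM : affineSpan ℝ (f '' A) ≤ M := by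
      apply affineSpan_le.2
      rintro _ ⟨a, ha, rfl⟩
      exact hallM a ha
    have hyM : f w ∈ (M : Set Plane) := hspanM hyspan
    -- the blocker injection: w sees all but at most l - 1 points of A
    set Inv : Set Plane := {a ∈ A | ¬ Visible P w a} with hInvdef
    have hInvex : ∀ a ∈ Inv, ∃ r, (r ∈ B ∧ r ≠ w) ∧ Sbtw ℝ w r a := by
      intro a haI
      have hwa : w ≠ a := by
        rintro rfl
        exact hwL (hAL haI.1)
      obtain ⟨r, hrP, hsb⟩ : ∃ r ∈ P, Sbtw ℝ w r a := by
        by_contra hno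
        push_neg at hno
        exact haI.2 ⟨hwa, fun r hr => hno r hr⟩
      refine ⟨r, ⟨⟨hrP, ?_⟩, hsb.ne_left⟩, hsb⟩
      intro hrL
      have haspan : a ∈ (affineSpan ℝ ({w, r} : Set Plane) : Set Plane) :=
        wbtw_mem_span hsb.wbtw hsb.ne_left
      have hcolwr := collinear_coe_span_pair w r
      have hwspan : w ∈ (affineSpan ℝ ({r, a} : Set Plane) : Set Plane) :=
        hcolwr.mem_affineSpan_of_mem_of_ne (right_mem_affineSpan_pair ℝ _ _) haspan
          (left_mem_affineSpan_pair ℝ _ _) hsb.ne_right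
      have hle : affineSpan ℝ ({r, a} : Set Plane) ≤ L := by
        apply affineSpan_le.2
        intro p hp
        rcases hp with hp2 | hp2 <;> rw [hp2]
        · exact hrL
        · exact hAL haI.1
      exact hwL (hle hwspan)
    choose! β hβB hβsb using hInvex
    have hInvfin : Inv.Finite := hAfin.subset (sep_subset _ _)
    have hβinj : InjOn β Inv := by
      intro a ha a' ha' heq
      by_contra hne'
      have h1 : a ∈ (affineSpan ℝ ({w, β a} : Set Plane) : Set Plane) :=
        wbtw_mem_span (hβsb a ha).wbtw (hβsb a ha).ne_left
      have h2 : a' ∈ (affineSpan ℝ ({w, β a} : Set Plane) : Set Plane) := by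
        have := wbtw_mem_span (hβsb a' ha').wbtw (hβsb a' ha').ne_left
        rwa [← heq] at this
      have hcolw := collinear_coe_span_pair w (β a)
      have hwin : w ∈ (affineSpan ℝ ({a, a'} : Set Plane) : Set Plane) :=
        hcolw.mem_affineSpan_of_mem_of_ne h1 h2 (left_mem_affineSpan_pair ℝ _ _) hne'
      have hle : affineSpan ℝ ({a, a'} : Set Plane) ≤ L := by
        apply affineSpan_le.2
        intro p hp
        rcases hp with hp2 | hp2 <;> rw [hp2]
        · exact hAL ha.1
        · exact hAL ha'.1
      exact hwL (hle hwin)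
    have hInvcard : Inv.ncard ≤ l - 1 := by
      have hmapsβ : ∀ a ∈ Inv, β a ∈ B \ {w} := fun a ha =>
        ⟨(hβB a ha).1, (hβB a ha).2⟩
      have := ncard_le_ncard_of_injOn β hmapsβ hβinj (hBfin.diff)
      rwa [ncard_diff (singleton_subset_iff.2 hwB) (finite_singleton _), hlB,
        ncard_singleton] at this
    have hl1 : 1 ≤ l := by
      have : 0 < B.ncard := (ncard_pos hBfin).2 ⟨w, hwB⟩
      omega
    have hViscard : 3 ≤ (A \ Inv).ncard := by
      have h3 : (A \ Inv).ncard = A.ncard - Inv.ncard :=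
        ncard_diff (fun x hx => hx.1) hInvfin
      have h2 : l + 2 ≤ k := le_trans (by nlinarith) hkl
      rw [h3, hkA]
      omega
    obtain ⟨a₁, ha₁, a₂, ha₂, a₃, ha₃, h12, h13, h23⟩ :=
      exists_three_distinct (hAfin.diff) (by omega : 2 < (A \ Inv).ncard)
    have hvisa : ∀ a, a ∈ A \ Inv → Visible P w a := by
      rintro a ⟨haA, haI⟩
      by_contra hnv
      exact haI ⟨haA, hnv⟩
    have hwne : ∀ a, a ∈ A \ Inv → w ≠ a := by
      rintro a ⟨haA, -⟩ rfl
      exact hwL (hAL haA)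
    have hvis' : ∀ a, a ∈ A \ Inv → Visible P' (f w) (f a) :=
      fun a ha => (hiff w hwP a (hAP (mem_of_mem_diff ha)) (hwne a ha)).1 (hvisa a ha)
    have hfne : ∀ a b : Plane, a ∈ A \ Inv → b ∈ A \ Inv → a ≠ b → f a ≠ f b := by
      intro a b ha hb hab h
      exact hab (finj (hAP (mem_of_mem_diff ha)) (hAP (mem_of_mem_diff hb)) h)
    have hcolfinal : Collinear ℝ ({f w, f a₁, f a₂, f a₃} : Set Plane) := by
      refine (collinear_coe_span_pair (f a₀) w₀).subset ?_
      intro p hp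
      rcases hp with rfl | rfl | rfl | rfl
      · exact hyM
      · exact hallM a₁ (mem_of_mem_diff ha₁)
      · exact hallM a₂ (mem_of_mem_diff ha₂)
      · exact hallM a₃ (mem_of_mem_diff ha₃)
    exact not_collinear_three_visible
      (hbij.mapsTo (hAP (mem_of_mem_diff ha₁)))
      (hbij.mapsTo (hAP (mem_of_mem_diff ha₂)))
      (hbij.mapsTo (hAP (mem_of_mem_diff ha₃)))
      (hvis' a₁ ha₁) (hvis' a₂ ha₂) (hvis' a₃ ha₃)
      (hfne a₁ a₂ ha₁ ha₂ h12) (hfne a₁ a₃ ha₁ ha₃ h13) (hfne a₂ a₃ ha₂ ha₃ h23)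
      hcolfinal
  · rintro _ ⟨a, ha, rfl⟩
    exact ⟨hbij.mapsTo (hAP ha), subset_affineSpan ℝ _ (mem_image_of_mem f ha)⟩
end

section
/- Let P and P' be finite sets of points in the Euclidean plane ℝ² and let f : P → P' be a visibility isomorphism. Let L be a line, let k be the number of points of P on L and l the number of points of P not on L, and suppose k ≥ (l + 3)². Then f preserves the order of the points of P along L: for all points a, b, c ∈ P ∩ L, if b lies strictly between a and c, then f(b) lies strictly between f(a) and f(c). -/
open AffineMap

noncomputable def coordFn (v : Plane) : Plane → ℝ := fun x => inner ℝ v x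

lemma coordFn_injOn {S : AffineSubspace ℝ Plane} {v : Plane} (hv : v ≠ 0)
    (hdir : S.direction = Submodule.span ℝ {v}) {x y : Plane}
    (hx : x ∈ S) (hy : y ∈ S) (h : coordFn v x = coordFn v y) : x = y := by
  have hxy : x -ᵥ y ∈ S.direction := AffineSubspace.vsub_mem_direction hx hy
  rw [hdir, Submodule.mem_span_singleton] at hxy
  obtain ⟨c, hc⟩ := hxy
  have hsub : x -ᵥ y = x - y := rfl
  rw [hsub] at hc
  have h0 : (inner ℝ v (x - y) : ℝ) = 0 := by
    simp only [coordFn] at h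
    rw [inner_sub_right, h, sub_self]
  rw [← hc, real_inner_smul_right] at h0
  have hv2 : (inner ℝ v v : ℝ) ≠ 0 := by
    exact (inner_self_ne_zero (𝕜 := ℝ)).2 hv
  have hc0 : c = 0 := by
    rcases mul_eq_zero.1 h0 with h' | h'
    · exact h'
    · exact absurd h' hv2
  rw [hc0, zero_smul] at hc
  have : x - y = 0 := hc.symm
  exact sub_eq_zero.1 this

lemma coord_lineMap (v x z : Plane) (s : ℝ) :
    coordFn v (lineMap x z s) = coordFn v x + s * (coordFn v z - coordFn v x) := by
  rw [lineMap_apply_module']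
  simp [coordFn, inner_add_right, inner_sub_right, real_inner_smul_right]
  ring

lemma sbtw_iff_coord {S : AffineSubspace ℝ Plane} {v : Plane} (hv : v ≠ 0)
    (hdir : S.direction = Submodule.span ℝ {v}) {x y z : Plane}
    (hx : x ∈ S) (hy : y ∈ S) (hz : z ∈ S) :
    Sbtw ℝ x y z ↔ (coordFn v x < coordFn v y ∧ coordFn v y < coordFn v z) ∨
      (coordFn v z < coordFn v y ∧ coordFn v y < coordFn v x) := by
  constructor
  · intro h
    obtain ⟨s, hs01, hy'⟩ := h.wbtw
    have hxz : x ≠ z := h.left_ne_right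
    have htxz : coordFn v x ≠ coordFn v z := fun he => hxz (coordFn_injOn hv hdir hx hz he)
    have hcy : coordFn v y = coordFn v x + s * (coordFn v z - coordFn v x) := by
      rw [← hy', coord_lineMap]
    have hs0 : s ≠ 0 := by
      rintro rfl; exact h.ne_left (by rw [← hy']; simp)
    have hs1 : s ≠ 1 := by
      rintro rfl; exact h.ne_right (by rw [← hy']; simp)
    have hs0' : 0 < s := lt_of_le_of_ne hs01.1 (Ne.symm hs0)
    have hs1' : s < 1 := lt_of_le_of_ne hs01.2 hs1
    rcases lt_or_gt_of_ne htxz with hlt | hgt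
    · left; constructor <;> nlinarith
    · right; constructor <;> nlinarith
  · intro h
    have hxz : coordFn v x ≠ coordFn v z := by rcases h with ⟨h1, h2⟩ | ⟨h1, h2⟩ <;> intro he <;> linarith
    have hxz' : x ≠ z := fun he => hxz (by rw [he])
    set s : ℝ := (coordFn v y - coordFn v x) / (coordFn v z - coordFn v x) with hs
    have hd : coordFn v z - coordFn v x ≠ 0 := sub_ne_zero.2 (Ne.symm hxz)
    have hw : lineMap x z s ∈ S := AffineMap.lineMap_mem s hx hz
    have hcw : coordFn v (lineMap x z s) = coordFn v y := by
      rw [coord_lineMap, hs]; field_simp; ring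
    have hyw : y = lineMap x z s := (coordFn_injOn hv hdir hy hw hcw.symm)
    have hsIoo : s ∈ Set.Ioo (0:ℝ) 1 := by
      rcases h with ⟨h1, h2⟩ | ⟨h1, h2⟩
      · constructor
        · apply div_pos <;> linarith
        · rw [div_lt_one (by linarith)]; linarith
      · constructor
        · apply div_pos_of_neg_of_neg <;> linarith
        · rw [div_lt_one_of_neg (by linarith)]; linarith
    rw [hyw]
    exact sbtw_lineMap_iff.2 ⟨hxz', hsIoo⟩

lemma wbtw_mem {S : AffineSubspace ℝ Plane} {x r z : Plane}
    (hx : x ∈ S) (hz : z ∈ S) (h : Wbtw ℝ x r z) : r ∈ S := by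
  obtain ⟨s, _, hr⟩ := h
  rw [← hr]
  exact AffineMap.lineMap_mem s hx hz

lemma exists_visible_wbtw {P' : Set Plane} (hP' : P'.Finite) {x y : Plane}
    (hy : y ∈ P') (hxy : y ≠ x) :
    ∃ d ∈ P', Visible P' x d ∧ Wbtw ℝ x d y := by
  classical
  set S : Set Plane := {z ∈ P' | z ≠ x ∧ Wbtw ℝ x z y} with hS
  have hSfin : S.Finite := hP'.subset (fun z hz => hz.1)
  have hSne : S.Nonempty := ⟨y, hy, hxy, wbtw_self_right ℝ x y⟩
  obtain ⟨d, hdS, hdmin⟩ := Set.exists_min_image S (dist x) hSfin hSne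
  refine ⟨d, hdS.1, ⟨Ne.symm hdS.2.1, ?_⟩, hdS.2.2⟩
  intro r hr hsb
  have hrS : r ∈ S := ⟨hr, hsb.ne_left, hdS.2.2.trans_left hsb.wbtw⟩
  have h1 : dist x r + dist r d = dist x d := hsb.wbtw.dist_add_dist
  have h2 : dist r d > 0 := dist_pos.2 hsb.ne_right
  have := hdmin r hrS
  linarith

lemma chain_mono (s : ℕ → ℝ) (b : ℕ) (adj : ∀ j, j + 1 ≤ b → s j < s (j+1)) :
    ∀ a c, a < c → c ≤ b → s a < s c := by
  intro a c hac hcb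
  induction c with
  | zero => omega
  | succ c ih =>
    rcases Nat.lt_or_ge a c with h | h
    · exact lt_trans (ih h (by omega)) (adj c (by omega))
    · have : a = c := by omega
      subst this
      exact adj a (by omega)

lemma adj_mono (n : ℕ) (s : ℕ → ℝ)
    (hinj : ∀ i < n, ∀ j < n, s i = s j → i = j)
    (H : ∀ i m, i + 1 < n → m < n → ¬(s i < s m ∧ s m < s (i+1)) ∧ ¬(s (i+1) < s m ∧ s m < s i))
    (h01 : s 0 < s 1) : ∀ i, i + 1 < n → s i < s (i+1) := by
  intro i
  induction i using Nat.strong_induction_on with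
  | _ i IH =>
    intro hin
    rcases Nat.eq_zero_or_pos i with rfl | hi
    · exact h01
    have adj : ∀ j, j + 1 ≤ i → s j < s (j+1) := fun j hj => IH j (by omega) (by omega)
    have mono : ∀ a c, a < c → c ≤ i → s a < s c := chain_mono s i adj
    by_contra hlt
    have hne : s (i+1) ≠ s i := fun h => by
      have := hinj (i+1) hin i (by omega) h; omega
    have hlt' : s (i+1) < s i := lt_of_le_of_ne (le_of_not_gt hlt) hne
    have hQ : ∃ j, j ≤ i ∧ s (i+1) < s j := ⟨i, le_refl i, hlt'⟩
    classical
    set j₀ := Nat.find hQ with hj₀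
    obtain ⟨hj₀i, hj₀s⟩ := Nat.find_spec hQ
    rcases Nat.eq_zero_or_pos j₀ with h0 | h1
    · have h0i : s 0 < s i := mono 0 i hi le_rfl
      rw [← hj₀, h0] at hj₀s
      exact (H i 0 hin (by omega)).2 ⟨hj₀s, h0i⟩
    · rw [← hj₀] at hj₀i hj₀s
      have hmin : ¬(j₀ - 1 ≤ i ∧ s (i+1) < s (j₀ - 1)) := Nat.find_min hQ (by omega)
      have h1' : ¬ s (i+1) < s (j₀ - 1) := fun hc => hmin ⟨by omega, hc⟩
      have hne2 : s (j₀ - 1) ≠ s (i + 1) := fun h => by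
        have := hinj (j₀ - 1) (by omega) (i+1) hin h; omega
      have hlt2 : s (j₀ - 1) < s (i + 1) := lt_of_le_of_ne (le_of_not_gt h1') hne2
      have heq : j₀ - 1 + 1 = j₀ := by omega
      have := (H (j₀ - 1) (i+1) (by omega) (by omega)).1
      rw [heq] at this
      exact this ⟨hlt2, hj₀s⟩


lemma exists_span_of_finrank_one {W : Submodule ℝ Plane} (h : Module.finrank ℝ W = 1) :
    ∃ v : Plane, v ≠ 0 ∧ W = Submodule.span ℝ {v} := by
  obtain ⟨v₀, hv₀, hall⟩ := finrank_eq_one_iff'.1 h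
  refine ⟨(v₀ : Plane), by simpa using hv₀, le_antisymm ?_ ?_⟩
  · intro w hw
    obtain ⟨c, hc⟩ := hall ⟨w, hw⟩
    rw [Submodule.mem_span_singleton]
    exact ⟨c, congrArg Subtype.val hc⟩
  · rw [Submodule.span_le, Set.singleton_subset_iff]
    exact v₀.2

/-- Part of Lemma 3 of the paper: if a line `L` contains `k` points of `P` and `l`
points of `P` lie off `L`, with `k ≥ (l + 3)²`, then a visibility isomorphism
preserves the order of the points of `P` along `L`: strict betweenness of triples
of points of `P ∩ L` is preserved. -/
theorem image_line_order_preserved (P P' : Set Plane)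
    (hP : P.Finite) (hP' : P'.Finite)
    (f : Plane → Plane) (hf : VisIso P P' f)
    (L : AffineSubspace ℝ Plane) (hL : IsLine L)
    (k l : ℕ)
    (hk : k = (P ∩ (L : Set Plane)).ncard)
    (hl : l = (P \ (L : Set Plane)).ncard)
    (hkl : (l + 3) ^ 2 ≤ k) :
    ∀ a ∈ P ∩ (L : Set Plane), ∀ b ∈ P ∩ (L : Set Plane), ∀ c ∈ P ∩ (L : Set Plane),
      Sbtw ℝ a b c → Sbtw ℝ (f a) (f b) (f c) := by
  classical
  obtain ⟨hbij, hvis⟩ := hf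
  set A : Set Plane := P ∩ (L : Set Plane) with hAdef
  set Bs : Set Plane := P \ (L : Set Plane) with hBdef
  have hAfin : A.Finite := hP.subset Set.inter_subset_left
  have hBfin : Bs.Finite := hP.subset Set.diff_subset
  have hAL : A ⊆ (L : Set Plane) := fun x hx => hx.2
  have hAP : A ⊆ P := fun x hx => hx.1
  obtain ⟨v, hv, hdir⟩ := exists_span_of_finrank_one hL
  have hk9 : 9 ≤ k := le_trans (by nlinarith) hkl
  have hkexp : (l + 3) ^ 2 = l * l + 6 * l + 9 := by ring
  -- blockers between two points of L lie in A
  have hblock : ∀ x z r : Plane, x ∈ L → z ∈ L → r ∈ P → Sbtw ℝ x r z → r ∈ A :=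
    fun x z r hx hz hr hs => ⟨hr, wbtw_mem hx hz hs.wbtw⟩
  -- at most 2 visible points of A from a point of A
  have hvisA : ∀ p ∈ A, {x ∈ A | Visible P p x}.ncard ≤ 2 := by
    intro p hp
    have hside : ∀ S : Set Plane,
        (∀ x ∈ S, x ∈ A ∧ Visible P p x) →
        (∀ x ∈ S, ∀ y ∈ S, x ≠ y →
          (Sbtw ℝ p x y ∨ Sbtw ℝ p y x)) → S.ncard ≤ 1 := by
      intro S hS hS2
      rw [Set.ncard_le_one_iff (hAfin.subset (fun x hx => (hS x hx).1))]
      intro x y hx hy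
      by_contra hne
      rcases hS2 x hx y hy hne with h | h
      · exact ((hS y hy).2.2 x (hAP (hS x hx).1)) h
      · exact ((hS x hx).2.2 y (hAP (hS y hy).1)) h
    have hsplit : {x ∈ A | Visible P p x} ⊆
        {x ∈ A | Visible P p x ∧ coordFn v p < coordFn v x} ∪
        {x ∈ A | Visible P p x ∧ coordFn v x < coordFn v p} := by
      rintro x ⟨hxA, hvx⟩
      have hne : coordFn v p ≠ coordFn v x := fun h =>
        hvx.1 (coordFn_injOn hv hdir (hAL hp) (hAL hxA) h)
      rcases lt_or_gt_of_ne hne with h | h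
      · exact Or.inl ⟨hxA, hvx, h⟩
      · exact Or.inr ⟨hxA, hvx, h⟩
    have h1 : {x ∈ A | Visible P p x ∧ coordFn v p < coordFn v x}.ncard ≤ 1 := by
      apply hside _ (fun x hx => ⟨hx.1, hx.2.1⟩)
      intro x hx y hy hne
      have hxy : coordFn v x ≠ coordFn v y := fun h =>
        hne (coordFn_injOn hv hdir (hAL hx.1) (hAL hy.1) h)
      rcases lt_or_gt_of_ne hxy with h | h
      · exact Or.inl ((sbtw_iff_coord hv hdir (hAL hp) (hAL hx.1) (hAL hy.1)).2
          (Or.inl ⟨hx.2.2, h⟩))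
      · exact Or.inr ((sbtw_iff_coord hv hdir (hAL hp) (hAL hy.1) (hAL hx.1)).2
          (Or.inl ⟨hy.2.2, h⟩))
    have h2 : {x ∈ A | Visible P p x ∧ coordFn v x < coordFn v p}.ncard ≤ 1 := by
      apply hside _ (fun x hx => ⟨hx.1, hx.2.1⟩)
      intro x hx y hy hne
      have hxy : coordFn v x ≠ coordFn v y := fun h =>
        hne (coordFn_injOn hv hdir (hAL hx.1) (hAL hy.1) h)
      rcases lt_or_gt_of_ne hxy with h | h
      · exact Or.inr ((sbtw_iff_coord hv hdir (hAL hp) (hAL hy.1) (hAL hx.1)).2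
          (Or.inr ⟨h, hy.2.2⟩))
      · exact Or.inl ((sbtw_iff_coord hv hdir (hAL hp) (hAL hx.1) (hAL hy.1)).2
          (Or.inr ⟨h, hx.2.2⟩))
    calc {x ∈ A | Visible P p x}.ncard
        ≤ ({x ∈ A | Visible P p x ∧ coordFn v p < coordFn v x} ∪
           {x ∈ A | Visible P p x ∧ coordFn v x < coordFn v p}).ncard := by
          exact Set.ncard_le_ncard hsplit
            ((hAfin.subset (fun x hx => hx.1)).union (hAfin.subset (fun x hx => hx.1)))
      _ ≤ _ + _ := Set.ncard_union_le _ _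
      _ ≤ 2 := by omega
  -- degree bound in P
  have hdeg : ∀ p ∈ A, {x ∈ P | Visible P p x}.ncard ≤ l + 2 := by
    intro p hp
    have hsub : {x ∈ P | Visible P p x} ⊆ Bs ∪ {x ∈ A | Visible P p x} := by
      rintro x ⟨hxP, hvx⟩
      by_cases hxL : x ∈ (L : Set Plane)
      · exact Or.inr ⟨⟨hxP, hxL⟩, hvx⟩
      · exact Or.inl ⟨hxP, hxL⟩
    calc {x ∈ P | Visible P p x}.ncard
        ≤ (Bs ∪ {x ∈ A | Visible P p x}).ncard :=
          Set.ncard_le_ncard hsub (hBfin.union (hAfin.subset (fun x hx => hx.1)))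
      _ ≤ Bs.ncard + {x ∈ A | Visible P p x}.ncard := Set.ncard_union_le _ _
      _ ≤ l + 2 := by
          have := hvisA p hp
          omega
  -- degree bound in P'
  have hdeg' : ∀ p ∈ A, {y ∈ P' | Visible P' (f p) y}.ncard ≤ l + 2 := by
    intro p hp
    have hpP : p ∈ P := hAP hp
    have himg : {y ∈ P' | Visible P' (f p) y} ⊆ f '' {x ∈ P | Visible P p x} := by
      rintro y ⟨hyP', hvy⟩
      obtain ⟨x, hxP, rfl⟩ := hbij.surjOn hyP'
      have hne : p ≠ x := fun h => hvy.1 (by rw [h])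
      exact ⟨x, ⟨hxP, (hvis p hpP x hxP hne).2 hvy⟩, rfl⟩
    have h2 := Set.ncard_le_ncard himg ((hP.subset (fun x hx => hx.1)).image f)
    have hVinj : Set.InjOn f {x ∈ P | Visible P p x} :=
      hbij.injOn.mono (fun x hx => hx.1)
    rw [Set.ncard_image_of_injOn hVinj] at h2
    exact le_trans h2 (hdeg p hp)
  -- A nonempty
  have hAne : A.Nonempty := Set.nonempty_of_ncard_ne_zero (by omega)
  obtain ⟨p₀, hp₀⟩ := hAne
  set q₀ : Plane := f p₀ with hq₀def
  -- Finsets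
  set FA : Finset Plane := hAfin.toFinset with hFAdef
  have hFAmem : ∀ x, x ∈ FA ↔ x ∈ A := fun x => hAfin.mem_toFinset
  have hFAcard : FA.card = k := by rw [hk, ← Set.ncard_coe_finset FA]; congr 1; ext x; simp [hFAmem]
  have hinjA : Set.InjOn f A := hbij.injOn.mono hAP
  set FQ : Finset Plane := FA.image f with hFQdef
  have hFQcard : FQ.card = k := by
    rw [Finset.card_image_of_injOn (by intro x hx y hy h; exact hinjA ((hFAmem x).1 hx) ((hFAmem y).1 hy) h), hFAcard]
  have hFQP' : ∀ y ∈ FQ, y ∈ P' := by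
    intro y hy
    obtain ⟨x, hx, rfl⟩ := Finset.mem_image.1 hy
    exact hbij.mapsTo (hAP ((hFAmem x).1 hx))
  have hq₀FQ : q₀ ∈ FQ := Finset.mem_image.2 ⟨p₀, (hFAmem p₀).2 hp₀, rfl⟩
  -- visible-neighbour choice function
  have hchoice : ∀ x : Plane, ∃ g : Plane → Plane, ∀ y, y ∈ P' → y ≠ x →
      g y ∈ P' ∧ Visible P' x (g y) ∧ Wbtw ℝ x (g y) y := by
    intro x
    refine ⟨fun y => if h : y ∈ P' ∧ y ≠ x then
      (exists_visible_wbtw hP' h.1 h.2).choose else x, ?_⟩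
    intro y hy hyx
    have h : y ∈ P' ∧ y ≠ x := ⟨hy, hyx⟩
    simp only [dif_pos h]
    obtain ⟨hd1, hd2, hd3⟩ := (exists_visible_wbtw hP' h.1 h.2).choose_spec
    exact ⟨hd1, hd2, hd3⟩
  -- visible-set Finsets
  have hvisFin : ∀ x : Plane, x ∈ FQ →
      ((hP'.toFinset.filter (fun y => Visible P' x y)).card ≤ l + 2) := by
    intro x hx
    obtain ⟨p, hp, rfl⟩ := Finset.mem_image.1 hx
    have heq : ((hP'.toFinset.filter (fun y => Visible P' (f p) y)) : Set Plane)
        = {y ∈ P' | Visible P' (f p) y} := by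
      ext y; simp [hP'.mem_toFinset]
    rw [← Set.ncard_coe_finset (hP'.toFinset.filter (fun y => Visible P' (f p) y)), heq]
    exact hdeg' p ((hFAmem p).1 hp)
  -- pigeonhole: a line through q₀ with many points of FQ
  obtain ⟨g, hg⟩ := hchoice q₀
  set FD : Finset Plane := hP'.toFinset.filter (fun y => Visible P' q₀ y) with hFDdef
  have hFDcard : FD.card ≤ l + 2 := hvisFin q₀ hq₀FQ
  have hmaps : ∀ y ∈ FQ.erase q₀, g y ∈ FD := by
    intro y hy
    obtain ⟨hyne, hyFQ⟩ := Finset.mem_erase.1 hy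
    obtain ⟨h1, h2, _⟩ := hg y (hFQP' y hyFQ) hyne
    exact Finset.mem_filter.2 ⟨hP'.mem_toFinset.2 h1, h2⟩
  have hcard2 : FD.card * (l + 3) < (FQ.erase q₀).card := by
    rw [Finset.card_erase_of_mem hq₀FQ, hFQcard]
    have h1 : FD.card * (l + 3) ≤ (l + 2) * (l + 3) := by
      apply Nat.mul_le_mul_right _ hFDcard
    have h2 : (l + 2) * (l + 3) = l * l + 5 * l + 6 := by ring
    omega
  obtain ⟨d, hdFD, hWcard⟩ :=
    Finset.exists_lt_card_fiber_of_mul_lt_card_of_maps_to hmaps hcard2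
  set W : Finset Plane := (FQ.erase q₀).filter (fun y => g y = d) with hWdef
  have hdvis : Visible P' q₀ d := (Finset.mem_filter.1 hdFD).2
  have hq₀d : q₀ ≠ d := hdvis.1
  set M : AffineSubspace ℝ Plane := line[ℝ, q₀, d] with hMdef
  have hq₀M : q₀ ∈ M := left_mem_affineSpan_pair ℝ q₀ d
  have hWM : ∀ y ∈ W, y ∈ M := by
    intro y hy
    obtain ⟨hy1, hy2⟩ := Finset.mem_filter.1 hy
    obtain ⟨hyne, hyFQ⟩ := Finset.mem_erase.1 hy1
    obtain ⟨_, _, hwb⟩ := hg y (hFQP' y hyFQ) hyne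
    rw [hy2] at hwb
    have hcol : Collinear ℝ ({q₀, d, y} : Set Plane) := hwb.collinear
    exact hcol.mem_affineSpan_of_mem_of_ne (Set.mem_insert _ _)
      (Set.mem_insert_of_mem _ (Set.mem_insert _ _))
      (Set.mem_insert_of_mem _ (Set.mem_insert_of_mem _ rfl)) hq₀d
  set FQM : Finset Plane := FQ.filter (fun y => y ∈ M) with hFQMdef
  have hFQMcard : l + 5 ≤ FQM.card := by
    have hsub : insert q₀ W ⊆ FQM := by
      intro y hy
      rcases Finset.mem_insert.1 hy with rfl | hyW
      · exact Finset.mem_filter.2 ⟨hq₀FQ, hq₀M⟩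
      · exact Finset.mem_filter.2 ⟨Finset.mem_of_mem_erase (Finset.mem_of_mem_filter _ hyW), hWM y hyW⟩
    have hq₀W : q₀ ∉ W := fun h =>
      (Finset.mem_erase.1 (Finset.mem_of_mem_filter _ h)).1 rfl
    have := Finset.card_le_card hsub
    rw [Finset.card_insert_of_notMem hq₀W] at this
    omega
  -- all of FQ lies on M
  have hQM : ∀ y ∈ FQ, y ∈ M := by
    by_contra hcon
    push_neg at hcon
    obtain ⟨qj, hqjFQ, hqjM⟩ := hcon
    obtain ⟨e, he⟩ := hchoice qj
    have hmaps2 : ∀ y ∈ FQM, e y ∈ hP'.toFinset.filter (fun z => Visible P' qj z) := by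
      intro y hy
      obtain ⟨hyFQ, hyM⟩ := Finset.mem_filter.1 hy
      have hyne : y ≠ qj := fun h => hqjM (h ▸ hyM)
      obtain ⟨h1, h2, _⟩ := he y (hFQP' y hyFQ) hyne
      exact Finset.mem_filter.2 ⟨hP'.mem_toFinset.2 h1, h2⟩
    have hinj2 : Set.InjOn e ↑FQM := by
      intro y hy y' hy' heq2
      by_contra hne
      obtain ⟨hyFQ, hyM⟩ := Finset.mem_filter.1 (Finset.mem_coe.1 hy)
      obtain ⟨hyFQ', hyM'⟩ := Finset.mem_filter.1 (Finset.mem_coe.1 hy')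
      have hyne : y ≠ qj := fun h => hqjM (h ▸ hyM)
      have hyne' : y' ≠ qj := fun h => hqjM (h ▸ hyM')
      obtain ⟨_, hv1, hw1⟩ := he y (hFQP' y hyFQ) hyne
      obtain ⟨_, hv1', hw1'⟩ := he y' (hFQP' y' hyFQ') hyne'
      rw [heq2] at hw1 hv1
      have hqjw : qj ≠ e y' := hv1'.1
      have hyline : y ∈ line[ℝ, qj, e y'] :=
        hw1.collinear.mem_affineSpan_of_mem_of_ne (Set.mem_insert _ _)
          (Set.mem_insert_of_mem _ (Set.mem_insert _ _))
          (Set.mem_insert_of_mem _ (Set.mem_insert_of_mem _ rfl)) hqjw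
      have hyline' : y' ∈ line[ℝ, qj, e y'] :=
        hw1'.collinear.mem_affineSpan_of_mem_of_ne (Set.mem_insert _ _)
          (Set.mem_insert_of_mem _ (Set.mem_insert _ _))
          (Set.mem_insert_of_mem _ (Set.mem_insert_of_mem _ rfl)) hqjw
      have hcol4 : Collinear ℝ ({y, y', qj, e y'} : Set Plane) :=
        collinear_insert_insert_of_mem_affineSpan_pair hyline hyline'
      have hqjyy' : qj ∈ line[ℝ, y, y'] :=
        hcol4.mem_affineSpan_of_mem_of_ne (Set.mem_insert _ _)
          (Set.mem_insert_of_mem _ (Set.mem_insert _ _))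
          (Set.mem_insert_of_mem _ (Set.mem_insert_of_mem _ (Set.mem_insert _ _))) hne
      have hsubM : line[ℝ, y, y'] ≤ M := affineSpan_le.2 (by
        intro z hz
        rcases hz with rfl | hz
        · exact hyM
        · rw [Set.mem_singleton_iff.1 hz]; exact hyM')
      exact hqjM (hsubM hqjyy')
    have hle := Finset.card_le_card_of_injOn e hmaps2 hinj2
    have := hvisFin qj hqjFQ
    omega
  -- direction of M
  have hdirM : M.direction = Submodule.span ℝ {q₀ - d} := by
    rw [hMdef, direction_affineSpan, vectorSpan_pair]
    rfl
  have hv' : q₀ - d ≠ 0 := sub_ne_zero.2 hq₀d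
  -- enumeration of A in coordinate order
  have htinjA : Set.InjOn (coordFn v) ↑FA := by
    intro x hx y hy h
    exact coordFn_injOn hv hdir (hAL ((hFAmem x).1 hx)) (hAL ((hFAmem y).1 hy)) h
  set TA : Finset ℝ := FA.image (coordFn v) with hTAdef
  have hTAcard : TA.card = k := by rw [hTAdef, Finset.card_image_of_injOn htinjA, hFAcard]
  set eo := TA.orderIsoOfFin hTAcard with heodef
  have hex : ∀ i : Fin k, ∃ a, a ∈ A ∧ coordFn v a = (eo i : ℝ) := by
    intro i
    have hmem : (eo i : ℝ) ∈ TA := (eo i).2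
    obtain ⟨a, ha, hta⟩ := Finset.mem_image.1 hmem
    exact ⟨a, (hFAmem a).1 ha, hta⟩
  set pt : Fin k → Plane := fun i => (hex i).choose with hptdef
  have hptA : ∀ i, pt i ∈ A := fun i => (hex i).choose_spec.1
  have hptt : ∀ i, coordFn v (pt i) = (eo i : ℝ) := fun i => (hex i).choose_spec.2
  have hptlt : ∀ i j : Fin k, i < j → coordFn v (pt i) < coordFn v (pt j) := by
    intro i j hij
    rw [hptt i, hptt j]
    exact_mod_cast eo.strictMono hij
  have hptlt' : ∀ a b : Fin k, coordFn v (pt a) < coordFn v (pt b) → a < b := by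
    intro a b h
    rcases lt_trichotomy a b with h' | h' | h'
    · exact h'
    · rw [h'] at h; exact absurd h (lt_irrefl _)
    · exact absurd h (not_lt.2 (le_of_lt (hptlt b a h')))
  have hptne : ∀ i j : Fin k, pt i = pt j → i = j := by
    intro i j h
    have h2 : (eo i : ℝ) = eo j := by rw [← hptt i, ← hptt j, h]
    exact eo.injective (Subtype.ext h2)
  have hptsurj : ∀ a ∈ A, ∃ i : Fin k, pt i = a := by
    intro a ha
    have hmem : coordFn v a ∈ TA := Finset.mem_image.2 ⟨a, (hFAmem a).2 ha, rfl⟩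
    obtain ⟨i, hi⟩ := eo.surjective ⟨_, hmem⟩
    refine ⟨i, coordFn_injOn hv hdir (hAL (hptA i)) (hAL ha) ?_⟩
    rw [hptt i, hi]
  -- adjacent points of A are visible in P
  have hadjP : ∀ (i : ℕ) (h1 : i < k) (h2 : i + 1 < k),
      Visible P (pt ⟨i, h1⟩) (pt ⟨i+1, h2⟩) := by
    intro i h1 h2
    constructor
    · intro h
      have := hptne _ _ h
      simp [Fin.ext_iff] at this
    · intro r hr hs
      have hrA : r ∈ A := hblock _ _ r (hAL (hptA _)) (hAL (hptA _)) hr hs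
      obtain ⟨m, rfl⟩ := hptsurj r hrA
      rcases (sbtw_iff_coord hv hdir (hAL (hptA _)) (hAL (hptA _)) (hAL (hptA _))).1 hs with
        ⟨ha1, ha2⟩ | ⟨ha1, ha2⟩
      · have u1 := hptlt' _ _ ha1
        have u2 := hptlt' _ _ ha2
        rw [Fin.lt_def] at u1 u2
        simp at u1 u2
        omega
      · have u1 := hptlt' _ _ ha1
        have u2 := hptlt' _ _ ha2
        rw [Fin.lt_def] at u1 u2
        simp at u1 u2
        omega
  -- transfer to P'
  have hqM : ∀ i : Fin k, f (pt i) ∈ M := fun i =>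
    hQM _ (Finset.mem_image.2 ⟨pt i, (hFAmem _).2 (hptA i), rfl⟩)
  have hqP' : ∀ i : Fin k, f (pt i) ∈ P' := fun i => hbij.mapsTo (hAP (hptA i))
  have hadjP' : ∀ (i : ℕ) (h1 : i < k) (h2 : i + 1 < k),
      Visible P' (f (pt ⟨i, h1⟩)) (f (pt ⟨i+1, h2⟩)) := by
    intro i h1 h2
    have hne : pt ⟨i, h1⟩ ≠ pt ⟨i+1, h2⟩ := by
      intro h
      have := hptne _ _ h
      simp [Fin.ext_iff] at this
    exact (hvis _ (hAP (hptA _)) _ (hAP (hptA _)) hne).1 (hadjP i h1 h2)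
  set s : ℕ → ℝ := fun i => if h : i < k then coordFn (q₀ - d) (f (pt ⟨i, h⟩)) else 0 with hsdef
  have hseq : ∀ (i : ℕ) (h : i < k), s i = coordFn (q₀ - d) (f (pt ⟨i, h⟩)) := by
    intro i h
    rw [hsdef]
    exact dif_pos h
  have hsinj : ∀ i < k, ∀ j < k, s i = s j → i = j := by
    intro i hi j hj h
    rw [hseq i hi, hseq j hj] at h
    have h2 : f (pt ⟨i, hi⟩) = f (pt ⟨j, hj⟩) := coordFn_injOn hv' hdirM (hqM _) (hqM _) h
    have h3 : pt ⟨i, hi⟩ = pt ⟨j, hj⟩ := hbij.injOn (hAP (hptA _)) (hAP (hptA _)) h2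
    have := hptne _ _ h3
    simpa [Fin.ext_iff] using this
  have hH : ∀ i m, i + 1 < k → m < k →
      ¬(s i < s m ∧ s m < s (i+1)) ∧ ¬(s (i+1) < s m ∧ s m < s i) := by
    intro i m hik hmk
    have hik' : i < k := by omega
    have hvisq := hadjP' i hik' hik
    constructor
    · rintro ⟨hlt1, hlt2⟩
      apply hvisq.2 (f (pt ⟨m, hmk⟩)) (hqP' _)
      rw [sbtw_iff_coord hv' hdirM (hqM _) (hqM _) (hqM _)]
      left
      constructor
      · rw [← hseq i hik', ← hseq m hmk]; exact hlt1
      · rw [← hseq m hmk, ← hseq (i+1) hik]; exact hlt2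
    · rintro ⟨hlt1, hlt2⟩
      apply hvisq.2 (f (pt ⟨m, hmk⟩)) (hqP' _)
      rw [sbtw_iff_coord hv' hdirM (hqM _) (hqM _) (hqM _)]
      right
      constructor
      · rw [← hseq (i+1) hik, ← hseq m hmk]; exact hlt1
      · rw [← hseq m hmk, ← hseq i hik']; exact hlt2
  have hne01 : s 0 ≠ s 1 := by
    intro h
    have := hsinj 0 (by omega) 1 (by omega) h
    omega
  have hdicho : (∀ a c : ℕ, a < c → c < k → s a < s c) ∨
      (∀ a c : ℕ, a < c → c < k → s c < s a) := by
    rcases lt_or_gt_of_ne hne01 with h01 | h01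
    · left
      have hadj := adj_mono k s hsinj hH h01
      intro a c hac hck
      exact chain_mono s (k-1) (fun j hj => hadj j (by omega)) a c hac (by omega)
    · right
      have hsinj2 : ∀ i < k, ∀ j < k, -(s i) = -(s j) → i = j := by
        intro i hi j hj h
        exact hsinj i hi j hj (neg_injective h)
      have hH2 : ∀ i m, i + 1 < k → m < k →
          ¬(-(s i) < -(s m) ∧ -(s m) < -(s (i+1))) ∧
          ¬(-(s (i+1)) < -(s m) ∧ -(s m) < -(s i)) := by
        intro i m h1 h2
        have hh := hH i m h1 h2
        constructor
        · rintro ⟨ha, hb⟩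
          exact hh.2 ⟨neg_lt_neg_iff.1 hb, neg_lt_neg_iff.1 ha⟩
        · rintro ⟨ha, hb⟩
          exact hh.1 ⟨neg_lt_neg_iff.1 hb, neg_lt_neg_iff.1 ha⟩
      have hadj := adj_mono k (fun i => -(s i)) hsinj2 hH2 (neg_lt_neg h01)
      intro a c hac hck
      have := chain_mono (fun i => -(s i)) (k-1) (fun j hj => hadj j (by omega)) a c hac (by omega)
      exact neg_lt_neg_iff.1 this
  -- conclusion
  intro a ha b hb c hc hsb
  obtain ⟨ia, hia⟩ := hptsurj a ha
  obtain ⟨ib, hib⟩ := hptsurj b hb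
  obtain ⟨ic, hic⟩ := hptsurj c hc
  subst hia hib hic
  have hco := (sbtw_iff_coord hv hdir (hAL (hptA ia)) (hAL (hptA ib)) (hAL (hptA ic))).1 hsb
  have hidx : (ia < ib ∧ ib < ic) ∨ (ic < ib ∧ ib < ia) := by
    rcases hco with ⟨h1, h2⟩ | ⟨h1, h2⟩
    · exact Or.inl ⟨hptlt' _ _ h1, hptlt' _ _ h2⟩
    · exact Or.inr ⟨hptlt' _ _ h1, hptlt' _ _ h2⟩
  rw [sbtw_iff_coord hv' hdirM (hqM ia) (hqM ib) (hqM ic)]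
  have hsa : s ia.val = coordFn (q₀ - d) (f (pt ia)) := by
    rw [hseq ia.val ia.isLt]
  have hsb2 : s ib.val = coordFn (q₀ - d) (f (pt ib)) := by
    rw [hseq ib.val ib.isLt]
  have hsc : s ic.val = coordFn (q₀ - d) (f (pt ic)) := by
    rw [hseq ic.val ic.isLt]
  rw [← hsa, ← hsb2, ← hsc]
  rcases hdicho with hmono | hanti
  · rcases hidx with ⟨h1, h2⟩ | ⟨h1, h2⟩
    · exact Or.inl ⟨hmono _ _ (Fin.lt_def.1 h1) ib.isLt, hmono _ _ (Fin.lt_def.1 h2) ic.isLt⟩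
    · exact Or.inr ⟨hmono _ _ (Fin.lt_def.1 h1) ib.isLt, hmono _ _ (Fin.lt_def.1 h2) ia.isLt⟩
  · rcases hidx with ⟨h1, h2⟩ | ⟨h1, h2⟩
    · exact Or.inr ⟨hanti _ _ (Fin.lt_def.1 h2) ic.isLt, hanti _ _ (Fin.lt_def.1 h1) ib.isLt⟩
    · exact Or.inl ⟨hanti _ _ (Fin.lt_def.1 h2) ia.isLt, hanti _ _ (Fin.lt_def.1 h1) ib.isLt⟩
end

section
/- Let L be a line in ℝ², let p₁, …, p_q be distinct points on L, and for each i let l_i be a line with p_i ∈ l_i and l_i ≠ L. Fix an index j such that p_j ∉ l_i for every i ≠ j, let F be a finite family of lines in ℝ², and let ε > 0. Then there exists a line L* through p_j, distinct from L, and points p*_i for 1 ≤ i ≤ q with p*_j = p_j, such that: (a) for each i ≠ j, the lines L* and l_i meet in exactly the point p*_i; (b) for each i, the distance from p*_i to p_i is less than ε; (c) the order along the line is preserved, i.e., for all indices a, b, c, the point p_b lies strictly between p_a and p_c on L if and only if p*_b lies strictly between p*_a and p*_c on L*; and (d) for each i ≠ j, the point p*_i does not lie on any line M ∈ F with M ≠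 l_i. -/
open Filter Topology Set

lemma isLine_exists_span {K : AffineSubspace ℝ Plane} (hK : IsLine K) :
    ∃ w : Plane, w ≠ 0 ∧ K.direction = ℝ ∙ w := by
  have hK' : Module.finrank ℝ K.direction = 1 := hK
  have hbot : K.direction ≠ ⊥ := by
    intro h; rw [h] at hK'; simp at hK'
  obtain ⟨w, hwK, hw0⟩ := Submodule.exists_mem_ne_zero_of_ne_bot hbot
  refine ⟨w, hw0, ?_⟩
  refine (Submodule.eq_of_le_of_finrank_eq ?_ ?_).symm
  · rwa [Submodule.span_singleton_le_iff_mem]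
  · rw [finrank_span_singleton hw0, hK']

lemma lines_inter_subsingleton {K₁ K₂ : AffineSubspace ℝ Plane} (h₁ : IsLine K₁)
    (h₂ : IsLine K₂) (hne : K₁ ≠ K₂) :
    ((K₁ : Set Plane) ∩ (K₂ : Set Plane)).Subsingleton := by
  have h₁' : Module.finrank ℝ K₁.direction = 1 := h₁
  have h₂' : Module.finrank ℝ K₂.direction = 1 := h₂
  intro x hx y hy
  by_contra hxy
  apply hne
  have h0 : y -ᵥ x ≠ 0 := fun h => hxy (vsub_eq_zero_iff_eq.mp h).symm
  have e1 : (ℝ ∙ (y -ᵥ x)) = K₁.direction :=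
    Submodule.eq_of_le_of_finrank_eq
      (by rw [Submodule.span_singleton_le_iff_mem]
          exact AffineSubspace.vsub_mem_direction hy.1 hx.1)
      (by rw [finrank_span_singleton h0, h₁'])
  have e2 : (ℝ ∙ (y -ᵥ x)) = K₂.direction :=
    Submodule.eq_of_le_of_finrank_eq
      (by rw [Submodule.span_singleton_le_iff_mem]
          exact AffineSubspace.vsub_mem_direction hy.2 hx.2)
      (by rw [finrank_span_singleton h0, h₂'])
  exact AffineSubspace.ext_of_direction_eq (e1.symm.trans e2) ⟨x, hx.1, hx.2⟩

lemma sbtw_real_iff {a b c : ℝ} :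
    Sbtw ℝ a b c ↔ (a < b ∧ b < c) ∨ (c < b ∧ b < a) := by
  unfold Sbtw Wbtw
  rw [affineSegment_eq_segment, segment_eq_uIcc, Set.mem_uIcc]
  constructor
  · rintro ⟨h | h, hba, hbc⟩
    · exact Or.inl ⟨lt_of_le_of_ne h.1 (Ne.symm hba), lt_of_le_of_ne h.2 hbc⟩
    · exact Or.inr ⟨lt_of_le_of_ne h.1 (Ne.symm hbc), lt_of_le_of_ne h.2 hba⟩
  · rintro (⟨h1, h2⟩ | ⟨h1, h2⟩)
    · exact ⟨Or.inl ⟨h1.le, h2.le⟩, h1.ne', h2.ne⟩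
    · exact ⟨Or.inr ⟨h1.le, h2.le⟩, h2.ne, h1.ne'⟩

lemma sbtw_smul_add_iff {x P : Plane} (hx : x ≠ 0) (a b c : ℝ) :
    Sbtw ℝ (a • x + P) (b • x + P) (c • x + P) ↔ Sbtw ℝ a b c := by
  have hPQ : P ≠ x + P := by
    intro h
    apply hx
    have := congrArg (· - P) h
    simpa using this.symm
  have hinj := AffineMap.lineMap_injective ℝ hPQ
  have happ : ∀ r : ℝ, AffineMap.lineMap P (x + P) r = r • x + P := by
    intro r
    simp [AffineMap.lineMap_apply]
  rw [← happ a, ← happ b, ← happ c, hinj.sbtw_map_iff]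

/-- Lemma 13 (move1) of the paper: a line `L` through distinct points `p 1, …, p q`,
each `p i` lying on a line `l i ≠ L`, can be rotated about a pivot `p j` (which lies on
no `l i` for `i ≠ j`) to a new line `L'` through `p j`, relocating each `p i` to a point
`p' i` on `L'` such that: each `p' i` (for `i ≠ j`) is the unique intersection point of
`L'` and `l i`; each `p' i` is within `ε` of `p i`; strict betweenness (the order of the
points along the line) is preserved; and each `p' i` (for `i ≠ j`) avoids every line of
the prescribed finite family `F` other than `l i`. -/
theorem rotate_line_about_pivot
    (L : AffineSubspace ℝ Plane) (hL : IsLine L)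
    (q : ℕ) (p : Fin q → Plane)
    (hp_inj : Function.Injective p)
    (hpL : ∀ i, p i ∈ L)
    (l : Fin q → AffineSubspace ℝ Plane)
    (hl_line : ∀ i, IsLine (l i))
    (hpl : ∀ i, p i ∈ l i)
    (hlL : ∀ i, l i ≠ L)
    (j : Fin q) (hj : ∀ i, i ≠ j → p j ∉ l i)
    (F : Set (AffineSubspace ℝ Plane)) (hF : F.Finite) (hFline : ∀ M ∈ F, IsLine M)
    (ε : ℝ) (hε : 0 < ε) :
    ∃ (L' : AffineSubspace ℝ Plane) (p' : Fin q → Plane),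
      IsLine L' ∧ L' ≠ L ∧ p j ∈ L' ∧ p' j = p j ∧
      (∀ i, p' i ∈ L') ∧
      (∀ i, i ≠ j → (L' : Set Plane) ∩ (l i : Set Plane) = {p' i}) ∧
      (∀ i, dist (p' i) (p i) < ε) ∧
      (∀ i₁ i₂ i₃ : Fin q,
        Sbtw ℝ (p i₁) (p i₂) (p i₃) ↔ Sbtw ℝ (p' i₁) (p' i₂) (p' i₃)) ∧
      (∀ i, i ≠ j → ∀ M ∈ F, M ≠ l i → p' i ∉ M) := by
  obtain ⟨v, hv0, hvL⟩ := isLine_exists_span hL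
  have hfin : Module.finrank ℝ Plane = 2 := finrank_euclideanSpace_fin
  have hvne : (ℝ ∙ v) ≠ (⊤ : Submodule ℝ Plane) := by
    intro h
    have h1 : Module.finrank ℝ (ℝ ∙ v) = 1 := finrank_span_singleton hv0
    rw [h, finrank_top ℝ Plane, hfin] at h1
    norm_num at h1
  obtain ⟨u, hu⟩ : ∃ u : Plane, u ∉ (ℝ ∙ v) := by
    by_contra h
    push_neg at h
    exact hvne (Submodule.eq_top_iff'.mpr h)
  have hind : ∀ a b : ℝ, a • v + b • u = 0 → a = 0 ∧ b = 0 := by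
    intro a b hab
    rcases eq_or_ne b 0 with hb | hb
    · subst hb
      simp only [zero_smul, add_zero, smul_eq_zero] at hab
      exact ⟨hab.resolve_right hv0, rfl⟩
    · exfalso
      apply hu
      rw [Submodule.mem_span_singleton]
      refine ⟨-(b⁻¹ * a), ?_⟩
      have h1 : b • u = -(a • v) := eq_neg_of_add_eq_zero_right hab
      calc -(b⁻¹ * a) • v = b⁻¹ • (-(a • v)) := by
            rw [smul_neg, smul_smul, neg_smul]
        _ = b⁻¹ • (b • u) := by rw [h1]
        _ = u := by rw [smul_smul, inv_mul_cancel₀ hb, one_smul]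
  have hspan : ∀ x : Plane, ∃ a b : ℝ, x = a • v + b • u := by
    have hlt : (ℝ ∙ v) < Submodule.span ℝ {v, u} := by
      apply lt_of_le_of_ne
      · exact Submodule.span_mono (by simp)
      · intro h
        exact hu (h ▸ Submodule.subset_span (by simp))
    have h2 : Module.finrank ℝ (Submodule.span ℝ ({v, u} : Set Plane)) = 2 := by
      have hle : Module.finrank ℝ (Submodule.span ℝ ({v, u} : Set Plane)) ≤
          Module.finrank ℝ Plane := Submodule.finrank_le _
      have hgt := Submodule.finrank_lt_finrank_of_lt hlt
      rw [finrank_span_singleton hv0] at hgt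
      omega
    have htop : Submodule.span ℝ ({v, u} : Set Plane) = ⊤ :=
      Submodule.eq_top_of_finrank_eq (h2.trans hfin.symm)
    intro x
    have hx : x ∈ Submodule.span ℝ ({v, u} : Set Plane) := htop ▸ Submodule.mem_top
    obtain ⟨a, b, hab⟩ := Submodule.mem_span_pair.mp hx
    exact ⟨a, b, hab.symm⟩
  have hptj : ∀ i, ∃ c : ℝ, c • v = p i -ᵥ p j := by
    intro i
    rw [← Submodule.mem_span_singleton, ← hvL]
    exact AffineSubspace.vsub_mem_direction (hpL i) (hpL j)
  choose t ht using hptj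
  have hp_eq : ∀ i, p i = t i • v + p j := by
    intro i
    have h1 := ht i
    rw [vsub_eq_sub, eq_comm, sub_eq_iff_eq_add] at h1
    exact h1
  have htj : t j = 0 := by
    have h1 := ht j
    rw [vsub_self] at h1
    exact (smul_eq_zero.mp h1).resolve_right hv0
  have ht_inj : Function.Injective t := by
    intro a b hab
    apply hp_inj
    rw [hp_eq a, hp_eq b, hab]
  have ht0 : ∀ i, i ≠ j → t i ≠ 0 := fun i hij h => hij (ht_inj (by rw [h, htj]))
  choose w hw0 hwdir using fun i => isLine_exists_span (hl_line i)
  choose α β hwab using fun i => hspan (w i)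
  have hβ : ∀ i, β i ≠ 0 := by
    intro i hβi
    have hα : α i ≠ 0 := by
      intro hαi
      apply hw0 i
      rw [hwab i, hβi, hαi]
      simp
    apply hlL i
    apply AffineSubspace.ext_of_direction_eq
    · rw [hwdir i, hvL]
      have h1 : w i = α i • v := by rw [hwab i, hβi]; simp
      rw [h1]
      exact Submodule.span_singleton_smul_eq (IsUnit.mk0 _ hα) v
    · exact ⟨p i, hpl i, hpL i⟩
  set g : Fin q → ℝ → ℝ := fun i θ => t i * β i / (β i - θ * α i) with hg_def
  set P : Fin q → ℝ → Plane := fun i θ => g i θ • (v + θ • u) + p j with hP_def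
  have hg0 : ∀ i, g i 0 = t i := by
    intro i
    simp only [hg_def]
    rw [zero_mul, sub_zero, mul_div_assoc, div_self (hβ i), mul_one]
  have hP0 : ∀ i, P i 0 = p i := by
    intro i
    simp only [hP_def]
    rw [hg0 i, hp_eq i]
    simp
  have hmem_li : ∀ i θ, β i - θ * α i ≠ 0 → P i θ ∈ l i := by
    intro i θ hd
    rw [← AffineSubspace.vsub_right_mem_direction_iff_mem (hpl i), hwdir i,
      Submodule.mem_span_singleton]
    refine ⟨g i θ * θ / β i, ?_⟩
    have h1 : P i θ -ᵥ p i = (g i θ - t i) • v + (g i θ * θ) • u := by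
      simp only [hP_def]
      rw [hp_eq i, vsub_eq_sub]
      module
    rw [hwab i, h1]
    have hkey : g i θ * (β i - θ * α i) = t i * β i := by
      simp only [hg_def]
      exact div_mul_cancel₀ _ hd
    have hc1 : g i θ * θ / β i * α i = g i θ - t i := by
      rw [div_mul_eq_mul_div, div_eq_iff (hβ i)]
      linear_combination -hkey
    have hc2 : g i θ * θ / β i * β i = g i θ * θ := div_mul_cancel₀ _ (hβ i)
    rw [smul_add, smul_smul, smul_smul, hc1, hc2]
  have hgc : ∀ i, ContinuousAt (fun θ => g i θ) 0 := by
    intro i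
    simp only [hg_def]
    apply ContinuousAt.div continuousAt_const
    · exact (continuous_const.sub (continuous_id.mul continuous_const)).continuousAt
    · simpa using hβ i
  have hPc : ∀ i, ContinuousAt (fun θ => P i θ) 0 := by
    intro i
    simp only [hP_def]
    exact ((hgc i).smul (continuousAt_const.add (continuousAt_id.smul
      continuousAt_const))).add continuousAt_const
  -- the eventual statements in the punctured neighborhood filter
  have EA : ∀ᶠ θ in 𝓝[≠] (0 : ℝ), θ ≠ 0 := by
    filter_upwards [self_mem_nhdsWithin] with θ hθ
    simpa using hθ
  have EB : ∀ᶠ θ in 𝓝[≠] (0 : ℝ), ∀ i, β i - θ * α i ≠ 0 := by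
    apply Filter.Eventually.filter_mono nhdsWithin_le_nhds
    rw [eventually_all]
    intro i
    have hc : ContinuousAt (fun θ : ℝ => β i - θ * α i) 0 :=
      (continuous_const.sub (continuous_id.mul continuous_const)).continuousAt
    exact hc.eventually_ne (by simpa using hβ i)
  have EC : ∀ᶠ θ in 𝓝[≠] (0 : ℝ), ∀ i, dist (P i θ) (p i) < ε := by
    apply Filter.Eventually.filter_mono nhdsWithin_le_nhds
    rw [eventually_all]
    intro i
    have hc : Filter.Tendsto (fun θ => P i θ) (𝓝 0) (𝓝 (p i)) := by
      rw [← hP0 i]; exact hPc i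
    have := hc (Metric.ball_mem_nhds (p i) hε)
    filter_upwards [this] with θ hθ
    exact Metric.mem_ball.mp hθ
  have ED : ∀ᶠ θ in 𝓝[≠] (0 : ℝ), ∀ a b, t a < t b → g a θ < g b θ := by
    apply Filter.Eventually.filter_mono nhdsWithin_le_nhds
    rw [eventually_all]
    intro a
    rw [eventually_all]
    intro b
    by_cases hab : t a < t b
    · have h1 : Filter.Tendsto (fun θ => g a θ) (𝓝 0) (𝓝 (t a)) := by
        rw [← hg0 a]; exact hgc a
      have h2 : Filter.Tendsto (fun θ => g b θ) (𝓝 0) (𝓝 (t b)) := by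
        rw [← hg0 b]; exact hgc b
      filter_upwards [h1.eventually_lt h2 hab] with θ hθ _
      exact hθ
    · exact Filter.Eventually.of_forall fun θ h => absurd h hab
  have EE : ∀ᶠ θ in 𝓝[≠] (0 : ℝ), ∀ i, i ≠ j → ∀ M ∈ F, M ≠ l i →
      ¬(β i - θ * α i ≠ 0 ∧ P i θ ∈ M) := by
    rw [eventually_all]
    intro i
    by_cases hij : i = j
    · exact Filter.Eventually.of_forall fun θ hne => absurd hij hne
    · have : ∀ᶠ θ in 𝓝[≠] (0 : ℝ), ∀ M ∈ F, M ≠ l i →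
          ¬(β i - θ * α i ≠ 0 ∧ P i θ ∈ M) := by
        rw [hF.eventually_all]
        intro M hM
        by_cases hMl : M = l i
        · exact Filter.Eventually.of_forall fun θ h => absurd hMl h
        · have hsub : {θ : ℝ | β i - θ * α i ≠ 0 ∧ P i θ ∈ M}.Subsingleton := by
            intro θ₁ h₁ θ₂ h₂
            have hMs := lines_inter_subsingleton (hFline M hM) (hl_line i) hMl
            have hPP : P i θ₁ = P i θ₂ :=
              hMs ⟨h₁.2, hmem_li i θ₁ h₁.1⟩ ⟨h₂.2, hmem_li i θ₂ h₂.1⟩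
            have hgne : ∀ θ, β i - θ * α i ≠ 0 → g i θ ≠ 0 := fun θ hd => by
              simp only [hg_def]
              exact div_ne_zero (mul_ne_zero (ht0 i hij) (hβ i)) hd
            have h4 : g i θ₁ • (v + θ₁ • u) = g i θ₂ • (v + θ₂ • u) := by
              have := hPP
              simp only [hP_def] at this
              exact add_right_cancel this
            have h3 : (g i θ₁ - g i θ₂) • v + (g i θ₁ * θ₁ - g i θ₂ * θ₂) • u = 0 := by
              linear_combination (norm := module) h4
            obtain ⟨hg12, hgθ⟩ := hind _ _ h3
            have hgeq : g i θ₁ = g i θ₂ := sub_eq_zero.mp hg12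
            have h5 : g i θ₁ * θ₁ = g i θ₁ * θ₂ := by
              rw [sub_eq_zero] at hgθ
              rw [hgθ, hgeq]
            exact mul_left_cancel₀ (hgne θ₁ h₁.1) h5
          rcases hsub.eq_empty_or_singleton with hS | ⟨b, hS⟩
          · exact Filter.Eventually.of_forall fun θ _ h =>
              Set.eq_empty_iff_forall_notMem.mp hS θ h
          · have hev : ∀ᶠ θ in 𝓝[≠] (0 : ℝ), θ ≠ b := by
              rcases eq_or_ne b 0 with rfl | hb
              · exact EA
              · exact Filter.Eventually.filter_mono nhdsWithin_le_nhds
                  (eventually_ne_nhds (Ne.symm hb))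
            filter_upwards [hev] with θ hθ _ hcon
            exact hθ (by
              have : θ ∈ {θ : ℝ | β i - θ * α i ≠ 0 ∧ P i θ ∈ M} := hcon
              rw [hS] at this
              exact this)
      filter_upwards [this] with θ hθ _
      exact hθ
  obtain ⟨θ, hθ0, hB, hC, hD, hE⟩ := (EA.and (EB.and (EC.and (ED.and EE)))).exists
  -- the rotated line and points
  have hx0 : v + θ • u ≠ 0 := by
    intro h
    have h1 := hind 1 θ (by rw [one_smul]; exact h)
    exact one_ne_zero h1.1
  refine ⟨AffineSubspace.mk' (p j) (ℝ ∙ (v + θ • u)), fun i => P i θ, ?_, ?_, ?_, ?_, ?_, ?_, ?_, ?_, ?_⟩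
  · show Module.finrank ℝ (AffineSubspace.mk' (p j) (ℝ ∙ (v + θ • u))).direction = 1
    rw [AffineSubspace.direction_mk']
    exact finrank_span_singleton hx0
  · intro h
    have hd : (ℝ ∙ (v + θ • u)) = ℝ ∙ v := by
      rw [← AffineSubspace.direction_mk' (p j) (ℝ ∙ (v + θ • u)), h, hvL]
    have hmem : v + θ • u ∈ (ℝ ∙ v) := hd ▸ Submodule.mem_span_singleton_self _
    obtain ⟨c, hc⟩ := Submodule.mem_span_singleton.mp hmem
    have h0 : (c - 1) • v + (-θ) • u = 0 := by
      linear_combination (norm := module) hc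
    exact hθ0 (neg_eq_zero.mp (hind _ _ h0).2)
  · exact AffineSubspace.self_mem_mk' _ _
  · show P j θ = p j
    simp only [hP_def, hg_def, htj]
    simp
  · intro i
    rw [AffineSubspace.mem_mk']
    show P i θ -ᵥ p j ∈ (ℝ ∙ (v + θ • u))
    simp only [hP_def]
    rw [vsub_eq_sub, add_sub_cancel_right]
    exact Submodule.smul_mem _ _ (Submodule.mem_span_singleton_self _)
  · -- unique intersection
    intro i hij
    have hmemL' : P i θ ∈ AffineSubspace.mk' (p j) (ℝ ∙ (v + θ • u)) := by
      rw [AffineSubspace.mem_mk']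
      show P i θ -ᵥ p j ∈ (ℝ ∙ (v + θ • u))
      simp only [hP_def]
      rw [vsub_eq_sub, add_sub_cancel_right]
      exact Submodule.smul_mem _ _ (Submodule.mem_span_singleton_self _)
    have hL'line : IsLine (AffineSubspace.mk' (p j) (ℝ ∙ (v + θ • u))) := by
      show Module.finrank ℝ (AffineSubspace.mk' (p j) (ℝ ∙ (v + θ • u))).direction = 1
      rw [AffineSubspace.direction_mk']
      exact finrank_span_singleton hx0
    have hne_li : AffineSubspace.mk' (p j) (ℝ ∙ (v + θ • u)) ≠ l i := by
      intro h
      have hd : (ℝ ∙ (v + θ • u)) = ℝ ∙ w i := by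
        rw [← AffineSubspace.direction_mk' (p j) (ℝ ∙ (v + θ • u)), h, hwdir i]
      have hmem : v + θ • u ∈ (ℝ ∙ w i) := hd ▸ Submodule.mem_span_singleton_self _
      obtain ⟨c, hc⟩ := Submodule.mem_span_singleton.mp hmem
      rw [hwab i] at hc
      have h0 : (c * α i - 1) • v + (c * β i - θ) • u = 0 := by
        linear_combination (norm := module) hc
      obtain ⟨h1, h2⟩ := hind _ _ h0
      apply hB i
      linear_combination (α i) * h2 - (β i) * h1
    apply Set.eq_singleton_iff_unique_mem.mpr
    refine ⟨⟨hmemL', hmem_li i θ (hB i)⟩, ?_⟩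
    intro y hy
    exact lines_inter_subsingleton hL'line (hl_line i) hne_li hy ⟨hmemL', hmem_li i θ (hB i)⟩
  · exact hC
  · intro i₁ i₂ i₃
    have hlt : ∀ a b, t a < t b ↔ g a θ < g b θ := by
      intro a b
      constructor
      · exact hD a b
      · intro h
        rcases lt_trichotomy (t a) (t b) with h' | h' | h'
        · exact h'
        · have hab : a = b := ht_inj h'
          rw [hab] at h
          exact absurd h (lt_irrefl _)
        · exact absurd h (not_lt.mpr (hD b a h').le)
    have e2 : ∀ i, P i θ = g i θ • (v + θ • u) + p j := fun i => rfl
    rw [hp_eq i₁, hp_eq i₂, hp_eq i₃, sbtw_smul_add_iff hv0]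
    show _ ↔ Sbtw ℝ (P i₁ θ) (P i₂ θ) (P i₃ θ)
    rw [e2 i₁, e2 i₂, e2 i₃, sbtw_smul_add_iff hx0]
    rw [sbtw_real_iff, sbtw_real_iff]
    simp only [hlt]
  · intro i hij M hM hMl hmem
    exact hE i hij M hM hMl ⟨hB i, hmem⟩
end
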